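/- arXiv:2604.07866 — 4 statements merged into one kernel-verified Lean document; each statement's English description precedes it below -/
import Mathlib

section
/- Let Ω be a bounded C² domain in ℝ^N (N ≥ 2). Let H₁, H₂ be two bounded Radon measures on Ω such that ∫_Ω ξ dH₁ ≥ ∫_Ω ξ dH₂ for every nonnegative ξ ∈ C(Ω̄). Let w₁, w₂ ∈ C^{0,1}(Ω̄) with w₁ ≥ w₂, and for i = 1, 2 let u_i ∈ C^{0,1}(Ω̄) be the maximizer of the functional 𝓘_{w_i,H_i}(u) = ∫_Ω √(1 − |∇u|²) dx + ∫_Ω u dH_i over 𝕏_{w_i}(Ω). Then u₁ ≥ u₂ in Ω. -/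
open MeasureTheory Real Filter Topology Metric
open scoped NNReal

noncomputable section

/-- Euclidean `N`-space `ℝ^N`. -/
abbrev Euc (N : ℕ) := EuclideanSpace ℝ (Fin N)

/-- Divergence of a vector field on `ℝ^N`. -/
def vdiv {N : ℕ} (V : Euc N → Euc N) (x : Euc N) : ℝ :=
  ∑ i : Fin N,
    (inner ℝ (fderiv ℝ V x (EuclideanSpace.single i (1 : ℝ)))
      (EuclideanSpace.single i (1 : ℝ)) : ℝ)

/-- The Lorentz–Minkowski mean curvature operator `ℳ₀u = -div(∇u/√(1-|∇u|²))`. -/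
def MC {N : ℕ} (u : Euc N → ℝ) (x : Euc N) : ℝ :=
  -vdiv (fun y => (Real.sqrt (1 - ‖gradient u y‖ ^ 2))⁻¹ • gradient u y) x

/-- `|∂B₁(0)|`, the surface area of the unit sphere of `ℝ^N`. -/
def sphArea (N : ℕ) : ℝ := N * (volume (ball (0 : Euc N) 1)).toReal

/-- `c_N = 1/|∂B₁(0)|`. -/
def cN (N : ℕ) : ℝ := (sphArea N)⁻¹

/-- Radial profile of the fundamental light-cone solution, `N ≥ 3`. -/
def Phirad (N : ℕ) (α r : ℝ) : ℝ :=
  cN N * α * ∫ s in Set.Ioi r, (Real.sqrt (s ^ (2 * (N - 1)) + (cN N * α) ^ 2))⁻¹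

/-- The fundamental solution `Φ_{N,α}` for `N ≥ 3`. -/
def Phi (N : ℕ) (α : ℝ) (x : Euc N) : ℝ := Phirad N α ‖x‖

/-- Radial profile of the two-dimensional fundamental solution `Φ_{2,α}`. -/
def Phi2rad (α r : ℝ) : ℝ :=
  -(α / (2 * Real.pi)) *
    (Real.log (r + Real.sqrt ((α / (2 * Real.pi)) ^ 2 + r ^ 2)) - Real.log (α / (2 * Real.pi)))

/-- The two-dimensional fundamental solution `Φ_{2,α}`. -/
def Phi2 (α : ℝ) (x : Euc 2) : ℝ := Phi2rad α ‖x‖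

/-- Radial profile of the fundamental solution, any dimension. -/
def PhiradG (N : ℕ) (α r : ℝ) : ℝ := if N = 2 then Phi2rad α r else Phirad N α r

/-- The weak pairing `∫ ∇u·∇φ/√(1-|∇u|²)`. -/
def pairing {N : ℕ} (u φ : Euc N → ℝ) : ℝ :=
  ∫ x, (inner ℝ (gradient u x) (gradient φ x) : ℝ) / Real.sqrt (1 - ‖gradient u x‖ ^ 2)

/-- The weak pairing `∫_s ∇u·∇φ/√(1-|∇u|²)` on a set `s`. -/
def pairingOn {N : ℕ} (u φ : Euc N → ℝ) (s : Set (Euc N)) : ℝ :=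
  ∫ x in s, (inner ℝ (gradient u x) (gradient φ x) : ℝ) / Real.sqrt (1 - ‖gradient u x‖ ^ 2)

/-- A compactly supported Lipschitz test function. -/
def IsLipTest {N : ℕ} (φ : Euc N → ℝ) : Prop :=
  (∃ K : ℝ≥0, LipschitzWith K φ) ∧ HasCompactSupport φ

/-- `u` is light-cone singular exactly at the points of `P`. -/
def LightConeSingularAt {N : ℕ} (u : Euc N → ℝ) (P : Set (Euc N)) : Prop :=
  (∀ x ∉ P, ‖gradient u x‖ < 1) ∧
    ∀ p ∈ P, Tendsto (fun x => ‖gradient u x‖) (𝓝[≠] p) (𝓝 1)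

/-- Weak solution of `ℳ₀u = ∑ αⱼ δ_{pⱼ}` in `𝒟'(ℝ^N)` vanishing at infinity. -/
def IsWeakSolRN {N m : ℕ} (u : Euc N → ℝ) (p : Fin m → Euc N) (α : Fin m → ℝ) : Prop :=
  (∃ K : ℝ≥0, LipschitzWith K u) ∧
    ContDiffOn ℝ 2 u {x | ∀ j, x ≠ p j} ∧
    LocallyIntegrable (fun x => ‖gradient u x‖ / Real.sqrt (1 - ‖gradient u x‖ ^ 2)) volume ∧
    Tendsto u (cocompact (Euc N)) (𝓝 0) ∧
    ∀ φ : Euc N → ℝ, IsLipTest φ → pairing u φ = ∑ j, α j * φ (p j)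

/-- The class `𝕏_∞(ℝ^N)`. -/
def Xinf {N : ℕ} : Set (Euc N → ℝ) :=
  {v | LipschitzWith 1 v ∧
    Integrable (fun x => 1 - Real.sqrt (1 - ‖gradient v x‖ ^ 2)) volume}

/-- The energy functional `𝒥_N`. -/
def JN {N m : ℕ} (p : Fin m → Euc N) (α : Fin m → ℝ) (w : Euc N → ℝ) : ℝ :=
  (∫ x, (1 - Real.sqrt (1 - ‖gradient w x‖ ^ 2))) - ∑ j, α j * w (p j)

/-- Directional (partial) derivative in the `i`-th coordinate direction. -/
def dirDeriv {N : ℕ} (i : Fin N) (f : Euc N → ℝ) (x : Euc N) : ℝ :=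
  fderiv ℝ f x (EuclideanSpace.single i (1 : ℝ))

/-- The multi-index partial derivative `D^a`. -/
def multiDeriv {N : ℕ} (a : Fin N → ℕ) (f : Euc N → ℝ) : Euc N → ℝ :=
  (List.finRange N).foldr (fun i g => (fun h => dirDeriv i h)^[a i] g) f

/-- `ws` is the symmetric decreasing rearrangement of `w` on the ball `B_R(0)`. -/
def IsSDROn {N : ℕ} (R : ℝ) (w ws : Euc N → ℝ) : Prop :=
  (∀ x y : Euc N, ‖x‖ ≤ ‖y‖ → ws y ≤ ws x) ∧
    ∀ t : ℝ, 0 < t →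
      volume {x : Euc N | x ∈ ball 0 R ∧ t < ws x} = volume {x : Euc N | x ∈ ball 0 R ∧ t < w x}

/-- Classical solution of the Dirichlet problem `ℳ₀u = f` on `B_R(z)`, `u = 0` on `∂B_R(z)`. -/
def IsClassicalDirichletAt {N : ℕ} (u : Euc N → ℝ) (z : Euc N) (R : ℝ) (f : Euc N → ℝ) : Prop :=
  ContinuousOn u (closure (ball z R)) ∧ ContDiffOn ℝ 2 u (ball z R) ∧
    (∀ x ∈ ball z R, ‖gradient u x‖ < 1 ∧ MC u x = f x) ∧
    ∀ x ∈ sphere z R, u x = 0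

/-- Classical solution of `ℳ₀u = f` on `ℝ^N` vanishing at infinity. -/
def IsClassicalEntire {N : ℕ} (u : Euc N → ℝ) (f : Euc N → ℝ) : Prop :=
  ContDiff ℝ 2 u ∧ (∀ x, ‖gradient u x‖ < 1 ∧ MC u x = f x) ∧
    Tendsto u (cocompact (Euc N)) (𝓝 0)

/-- Weak solution of `ℳ₀u = ∑ αⱼ δ_{pⱼ}` on `B_R(z)` with zero boundary data. -/
def IsWeakSolBallAt {N m : ℕ} (u : Euc N → ℝ) (z : Euc N) (R : ℝ)
    (p : Fin m → Euc N) (α : Fin m → ℝ) : Prop :=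
  LipschitzOnWith 1 u (closure (ball z R)) ∧
    (∀ x ∈ sphere z R, u x = 0) ∧
    ContDiffOn ℝ 2 u {x | x ∈ ball z R ∧ ∀ j, x ≠ p j} ∧
    IntegrableOn (fun x => ‖gradient u x‖ / Real.sqrt (1 - ‖gradient u x‖ ^ 2)) (ball z R)
      volume ∧
    ∀ φ : Euc N → ℝ, (∃ K : ℝ≥0, LipschitzWith K φ) → (∀ x ∈ sphere z R, φ x = 0) →
      pairingOn u φ (ball z R) = ∑ j, α j * φ (p j)

/-- The class `𝕏_w(Ω)`. -/
def Xw {N : ℕ} (Ω : Set (Euc N)) (w : Euc N → ℝ) : Set (Euc N → ℝ) :=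
  {v | (∃ K : ℝ≥0, LipschitzOnWith K v (closure Ω)) ∧
    (∀ x ∈ frontier Ω, v x = w x) ∧
    ∀ᵐ x ∂volume.restrict Ω, ‖gradient v x‖ ≤ 1}

/-- The functional `𝓘_{w,H}` (its value does not depend on the boundary datum). -/
def Ifun {N : ℕ} (Ω : Set (Euc N)) (H : Measure (Euc N)) (u : Euc N → ℝ) : ℝ :=
  (∫ x in Ω, Real.sqrt (1 - ‖gradient u x‖ ^ 2)) + ∫ x in Ω, u x ∂H

section AuxComparison
open Set
open scoped ENNReal
set_option maxHeartbeats 1000000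


lemma grad_norm {N : ℕ} (v : Euc N → ℝ) (x : Euc N) :
    ‖gradient v x‖ = ‖fderiv ℝ v x‖ := by
  unfold gradient; exact LinearIsometryEquiv.norm_map _ _

lemma key_ineq {N : ℕ} (a b : Euc N) (ha : ‖a‖ ≤ 1) (hb : ‖b‖ ≤ 1) :
    (Real.sqrt (1 - ‖a‖^2) + Real.sqrt (1 - ‖b‖^2))/2 ≤
      Real.sqrt (1 - ‖(2⁻¹ : ℝ) • (a + b)‖^2) := by
  have ha0 := norm_nonneg a; have hb0 := norm_nonneg b
  have ha2 : 0 ≤ 1 - ‖a‖^2 := by nlinarith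
  have hb2 : 0 ≤ 1 - ‖b‖^2 := by nlinarith
  set s := Real.sqrt (1 - ‖a‖^2) with hs
  set t := Real.sqrt (1 - ‖b‖^2) with ht
  have hs0 : 0 ≤ s := Real.sqrt_nonneg _
  have ht0 : 0 ≤ t := Real.sqrt_nonneg _
  have hs2 : s^2 = 1 - ‖a‖^2 := Real.sq_sqrt ha2
  have ht2 : t^2 = 1 - ‖b‖^2 := Real.sq_sqrt hb2
  have hab : (inner ℝ a b : ℝ) ≤ ‖a‖ * ‖b‖ := real_inner_le_norm a b
  have hnorm : ‖(2⁻¹:ℝ) • (a+b)‖^2 = (‖a‖^2 + 2*(inner ℝ a b : ℝ) + ‖b‖^2)/4 := by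
    rw [norm_smul, mul_pow, norm_add_sq_real]
    norm_num; ring
  obtain ⟨p, hp⟩ : ∃ p : ℝ, (inner ℝ a b : ℝ) = p := ⟨_, rfl⟩
  rw [hp] at hab hnorm
  have hcle : 0 ≤ 1 - ‖(2⁻¹:ℝ) • (a+b)‖^2 := by
    rw [hnorm]; nlinarith
  rw [Real.le_sqrt (by positivity) hcle, hnorm]
  nlinarith [sq_nonneg (‖a‖ - ‖b‖), sq_nonneg (s - t)]

lemma key_eq {N : ℕ} (a b : Euc N) (ha : ‖a‖ ≤ 1) (hb : ‖b‖ ≤ 1)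
    (h : Real.sqrt (1 - ‖(2⁻¹:ℝ) • (a+b)‖^2)
        = (Real.sqrt (1-‖a‖^2) + Real.sqrt (1-‖b‖^2))/2) :
    a = b := by
  have ha0 := norm_nonneg a; have hb0 := norm_nonneg b
  have ha2 : 0 ≤ 1 - ‖a‖^2 := by nlinarith
  have hb2 : 0 ≤ 1 - ‖b‖^2 := by nlinarith
  set s := Real.sqrt (1 - ‖a‖^2) with hs
  set t := Real.sqrt (1 - ‖b‖^2) with ht
  have hs0 : 0 ≤ s := Real.sqrt_nonneg _
  have ht0 : 0 ≤ t := Real.sqrt_nonneg _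
  have hs2 : s^2 = 1 - ‖a‖^2 := Real.sq_sqrt ha2
  have ht2 : t^2 = 1 - ‖b‖^2 := Real.sq_sqrt hb2
  have hab : (inner ℝ a b : ℝ) ≤ ‖a‖ * ‖b‖ := real_inner_le_norm a b
  set p : ℝ := (inner ℝ a b : ℝ) with hp
  clear_value p
  have hnorm : ‖(2⁻¹:ℝ) • (a+b)‖^2 = (‖a‖^2 + 2*(inner ℝ a b : ℝ) + ‖b‖^2)/4 := by
    rw [norm_smul, mul_pow, norm_add_sq_real]
    norm_num; ring
  have hcle : 0 ≤ 1 - ‖(2⁻¹:ℝ) • (a+b)‖^2 := by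
    rw [hnorm]; nlinarith
  have hsq : 1 - ‖(2⁻¹:ℝ) • (a+b)‖^2 = ((s+t)/2)^2 := by
    rw [← h, Real.sq_sqrt hcle]
  rw [hnorm] at hsq
  have key : (inner ℝ a b : ℝ) + s * t = 1 := by nlinarith
  have hsub : ‖a - b‖^2 = 0 := by
    rw [norm_sub_sq_real]
    nlinarith [sq_nonneg (‖a‖ - ‖b‖), sq_nonneg (s - t)]
  have : ‖a - b‖ = 0 := by
    have := sq_nonneg ‖a - b‖
    nlinarith [norm_nonneg (a - b)]
  rwa [norm_eq_zero, sub_eq_zero] at this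

lemma sqrt_one_sub_le_one {u : ℝ} (hu : 0 ≤ u) : Real.sqrt (1 - u) ≤ 1 := by
  calc Real.sqrt (1 - u) ≤ Real.sqrt 1 := Real.sqrt_le_sqrt (by linarith)
  _ = 1 := Real.sqrt_one


lemma det_zero_R : ((0 : ℝ →L[ℝ] ℝ)).det = 0 := by
  have : ((0 : ℝ →L[ℝ] ℝ) : ℝ →ₗ[ℝ] ℝ) = 0 := rfl
  rw [ContinuousLinearMap.det, this]
  exact LinearMap.det_zero' (Module.Basis.singleton Unit ℝ)

/-- A locally Lipschitz real function on `[0,1]` with vanishing derivative a.e. is constant. -/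
lemma seg_const {f : ℝ → ℝ} {K : ℝ≥0} (hf : LipschitzOnWith K f (Icc 0 1))
    {E : Set ℝ} (hEm : MeasurableSet E) (hE : volume (Ioo (0:ℝ) 1 \ E) = 0)
    (hd : ∀ t ∈ E ∩ Ioo (0:ℝ) 1, HasDerivAt f 0 t) : f 0 = f 1 := by
  set S := E ∩ Ioo (0:ℝ) 1 with hS
  have hSm : MeasurableSet S := hEm.inter measurableSet_Ioo
  have h1 : volume (f '' S) = 0 := by
    have hle := addHaar_image_le_lintegral_abs_det_fderiv (volume : Measure ℝ) hSm
      (f' := fun _ => (0 : ℝ →L[ℝ] ℝ)) (fun x hx => by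
        have h0 : HasFDerivAt f (0 : ℝ →L[ℝ] ℝ) x := by
          have h := (hd x hx).hasFDerivAt
          have e : (ContinuousLinearMap.toSpanSingleton ℝ (0:ℝ)) = 0 := by
            ext; simp
          rwa [e] at h
        exact h0.hasFDerivWithinAt)
    simpa [det_zero_R] using hle
  have h2 : volume (f '' (Icc (0:ℝ) 1 \ S)) = 0 := by
    have him := LipschitzOnWith.hausdorffMeasure_image_le (hf.mono (diff_subset : Icc (0:ℝ) 1 \ S ⊆ Icc 0 1)) (le_of_lt one_pos)
    rw [MeasureTheory.hausdorffMeasure_real] at him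
    have hnull : volume (Icc (0:ℝ) 1 \ S) = 0 := by
      have hsub : Icc (0:ℝ) 1 \ S ⊆ {0, 1} ∪ (Ioo (0:ℝ) 1 \ E) := by
        intro x hx
        rcases hx with ⟨hx1, hx2⟩
        by_cases hio : x ∈ Ioo (0:ℝ) 1
        · right; exact ⟨hio, fun hxe => hx2 ⟨hxe, hio⟩⟩
        · left
          rcases eq_or_lt_of_le hx1.1 with h | h
          · exact Or.inl h.symm
          rcases eq_or_lt_of_le hx1.2 with h' | h'
          · exact Or.inr h'
          exact absurd ⟨h, h'⟩ hio
      refine le_antisymm ?_ zero_le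
      calc volume (Icc (0:ℝ) 1 \ S) ≤ volume ({0,1} ∪ (Ioo (0:ℝ) 1 \ E)) := measure_mono hsub
      _ ≤ volume ({(0:ℝ),1}) + volume (Ioo (0:ℝ) 1 \ E) := measure_union_le _ _
      _ = 0 := by
        rw [hE, (Set.toFinite ({(0:ℝ),1} : Set ℝ)).measure_zero, add_zero]
    refine le_antisymm ?_ zero_le
    calc volume (f '' (Icc (0:ℝ) 1 \ S)) ≤ (K:ℝ≥0∞)^(1:ℝ) * volume (Icc (0:ℝ) 1 \ S) := him
    _ = 0 := by rw [hnull, mul_zero]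
  have h3 : volume (f '' Icc (0:ℝ) 1) = 0 := by
    have : f '' Icc (0:ℝ) 1 ⊆ f '' S ∪ f '' (Icc (0:ℝ) 1 \ S) := by
      rw [← image_union]
      apply image_mono
      intro x hx
      by_cases h : x ∈ S
      · exact Or.inl h
      · exact Or.inr ⟨hx, h⟩
    refine le_antisymm ?_ zero_le
    calc volume (f '' Icc (0:ℝ) 1) ≤ volume (f '' S) + volume (f '' (Icc (0:ℝ) 1 \ S)) :=
      (measure_mono this).trans (measure_union_le _ _)
    _ = 0 := by rw [h1, h2, add_zero]
  have h4 : uIcc (f 0) (f 1) ⊆ f '' Icc (0:ℝ) 1 := by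
    have := intermediate_value_uIcc (f := f) (a := (0:ℝ)) (b := 1)
      (by rw [uIcc_of_le (by norm_num : (0:ℝ) ≤ 1)]; exact hf.continuousOn)
    rwa [uIcc_of_le (by norm_num : (0:ℝ) ≤ 1)] at this
  have h5 : volume (uIcc (f 0) (f 1)) = 0 :=
    le_antisymm ((measure_mono h4).trans h3.le) zero_le
  rw [uIcc, Real.volume_Icc, ENNReal.ofReal_eq_zero, sub_nonpos] at h5
  exact le_antisymm (le_trans (le_max_left _ _) (h5.trans (min_le_right _ _))) (le_trans (le_max_right _ _) (h5.trans (min_le_left _ _)))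
/-- On a ball inside the a.e.-critical region, a Lipschitz function is constant. -/
lemma ball_const {N : ℕ} {Ωs : Set (Euc N)} (hΩo : IsOpen Ωs)
    {h : Euc N → ℝ} {K : ℝ≥0} (hLip : LipschitzOnWith K h (closure Ωs))
    (hae : ∀ᵐ x ∂(volume.restrict Ωs), DifferentiableAt ℝ h x ∧ fderiv ℝ h x = 0)
    {z : Euc N} {r : ℝ} (hr : 0 < r) (hball : ball z r ⊆ Ωs) :
    ∀ x ∈ ball z r, h x = h z := by
  classical
  set G : Set (Euc N) := {x | DifferentiableAt ℝ h x ∧ fderiv ℝ h x = 0} with hG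
  have hGm : MeasurableSet G := by
    have h1 : MeasurableSet {x : Euc N | DifferentiableAt ℝ h x} :=
      measurableSet_of_differentiableAt ℝ h
    have h2 : MeasurableSet {x : Euc N | fderiv ℝ h x = 0} :=
      (measurable_fderiv ℝ h) (measurableSet_singleton 0)
    exact h1.inter h2
  set Z : Set (Euc N) := Ωs \ G with hZ
  have hZm : MeasurableSet Z := hΩo.measurableSet.diff hGm
  have hZ0 : volume Z = 0 := by
    rw [ae_restrict_iff' hΩo.measurableSet] at hae
    rw [Filter.eventually_iff, mem_ae_iff] at hae
    refine measure_mono_null ?_ hae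
    intro x hx
    simp only [mem_compl_iff, mem_setOf_eq, not_forall]
    exact ⟨hx.1, fun hP => hx.2 hP⟩
  -- the bad set in the product space
  set Bad : Set (Euc N × ℝ) :=
      (Prod.snd ⁻¹' Ioo (0:ℝ) 1) ∩ ((fun p : Euc N × ℝ => z + p.2 • (p.1 - z)) ⁻¹' Z) with hBad
  have hcont : Continuous (fun p : Euc N × ℝ => z + p.2 • (p.1 - z)) := by
    apply Continuous.add continuous_const
    exact (continuous_snd).smul ((continuous_fst).sub continuous_const)
  have hBadm : MeasurableSet Bad :=
    (measurable_snd measurableSet_Ioo).inter (hcont.measurable hZm)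
  have hslice : ∀ t : ℝ, volume ((fun x : Euc N => (x, t)) ⁻¹' Bad) = 0 := by
    intro t
    by_cases ht : t ∈ Ioo (0:ℝ) 1
    · have ht0 : t ≠ 0 := ne_of_gt ht.1
      have e0 : (fun x : Euc N => (x, t)) ⁻¹' Bad = (fun x : Euc N => z + t • (x - z)) ⁻¹' Z := by
        ext x; simp [hBad, ht]
      rw [e0]
      have e1 : (fun x : Euc N => z + t • (x - z)) ⁻¹' Z
          = (fun x : Euc N => x + (-z)) ⁻¹' ((fun y : Euc N => t • y) ⁻¹' ((fun y : Euc N => z + y) ⁻¹' Z)) := by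
        ext x; simp [sub_eq_add_neg]
      rw [e1]
      rw [measure_preimage_add_right]
      rw [preimage_smul₀ ht0]
      rw [Measure.addHaar_smul]
      rw [measure_preimage_add, hZ0, mul_zero]
    · have e0 : (fun x : Euc N => (x, t)) ⁻¹' Bad = ∅ := by
        ext x; simp [hBad, ht]
      rw [e0, measure_empty]
  have hprod : ((volume : Measure (Euc N)).prod (volume : Measure ℝ)) Bad = 0 := by
    rw [Measure.prod_apply_symm hBadm]
    simp only [hslice]
    simp
  have hgood : ∀ᵐ x ∂(volume : Measure (Euc N)), volume (Prod.mk x ⁻¹' Bad) = 0 :=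
    (Measure.measure_prod_null hBadm).mp hprod
  -- pointwise constancy on good points of the ball
  have hpoint : ∀ x ∈ ball z r, volume (Prod.mk x ⁻¹' Bad) = 0 → h x = h z := by
    intro x hx hx0
    set c : ℝ → Euc N := fun t => z + t • (x - z) with hc
    have hc_mem : ∀ t ∈ Icc (0:ℝ) 1, c t ∈ ball z r := by
      intro t htt
      have : c t ∈ segment ℝ z x := by
        rw [segment_eq_image']
        exact ⟨t, htt, rfl⟩
      exact (convex_ball z r).segment_subset (mem_ball_self hr) hx this
    have hcLip : LipschitzWith ‖x - z‖₊ c := by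
      apply LipschitzWith.of_dist_le_mul
      intro s t
      rw [dist_eq_norm, dist_eq_norm]
      have e : c s - c t = (s - t) • (x - z) := by
        simp only [hc, add_sub_add_left_eq_sub, ← sub_smul]
      rw [e, norm_smul, coe_nnnorm]
      exact le_of_eq (mul_comm _ _)
    have hfLip : LipschitzOnWith (K * ‖x - z‖₊) (h ∘ c) (Icc 0 1) := by
      apply LipschitzOnWith.comp hLip (hcLip.lipschitzOnWith)
      intro t htt
      exact subset_closure (hball (hc_mem t htt))
    set E : Set ℝ := c ⁻¹' G with hE
    have hEm : MeasurableSet E := by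
      have hcc : Continuous c :=
        continuous_const.add ((continuous_id).smul continuous_const)
      exact hcc.measurable hGm
    have hE0 : volume (Ioo (0:ℝ) 1 \ E) = 0 := by
      refine measure_mono_null ?_ hx0
      intro t htt
      have hmem : c t ∈ Ωs := hball (hc_mem t ⟨le_of_lt htt.1.1, le_of_lt htt.1.2⟩)
      constructor
      · exact htt.1
      · exact ⟨hmem, htt.2⟩
    have hderiv : ∀ t ∈ E ∩ Ioo (0:ℝ) 1, HasDerivAt (h ∘ c) 0 t := by
      intro t htt
      have hgt : c t ∈ G := htt.1
      have hcd : HasDerivAt c (x - z) t := by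
        have h1 : HasDerivAt (fun s : ℝ => s • (x - z)) ((1:ℝ) • (x - z)) t :=
          (hasDerivAt_id t).smul_const (x - z)
        have h2 := h1.const_add z
        rw [one_smul] at h2
        exact h2
      have hhd : HasFDerivAt h (0 : Euc N →L[ℝ] ℝ) (c t) := by
        have := hgt.1.hasFDerivAt
        rwa [hgt.2] at this
      have := hhd.comp_hasDerivAt t hcd
      simpa using this
    have := seg_const hfLip hEm hE0 hderiv
    simp only [Function.comp_apply, hc] at this
    rw [zero_smul, add_zero, one_smul, add_sub_cancel] at this
    exact this.symm
  -- upgrade a.e. to everywhere by continuity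
  have hcont_h : ∀ x ∈ ball z r, ContinuousAt h x := by
    intro x hx
    have : ContinuousOn h Ωs := hLip.continuousOn.mono subset_closure
    exact this.continuousAt (hΩo.mem_nhds (hball hx))
  intro x hx
  by_contra hne
  have hd : 0 < |h x - h z| := by
    rw [abs_pos]; exact sub_ne_zero_of_ne hne
  obtain ⟨ρ, hρ0, hρ⟩ : ∃ ρ > 0, ball x ρ ⊆ ball z r ∩ {y | |h y - h x| < |h x - h z|} := by
    have h1 : ∀ᶠ y in 𝓝 x, |h y - h x| < |h x - h z| := by
      have := hcont_h x hx
      have := this.tendsto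
      have h2 : ∀ᶠ s in 𝓝 (h x), |s - h x| < |h x - h z| := by
        apply Filter.eventually_iff_exists_mem.mpr
        exact ⟨ball (h x) |h x - h z|, ball_mem_nhds _ hd, fun s hs => by
          simpa [Real.dist_eq] using hs⟩
      exact this.eventually h2
    have h2 : ∀ᶠ y in 𝓝 x, y ∈ ball z r := isOpen_ball.mem_nhds hx
    have h3 := h1.and h2
    rcases Metric.eventually_nhds_iff_ball.mp h3 with ⟨ρ, hρ0, hρ⟩
    exact ⟨ρ, hρ0, fun y hy => ⟨(hρ y hy).2, (hρ y hy).1⟩⟩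
  have hsub : ball x ρ ⊆ {y | volume (Prod.mk y ⁻¹' Bad) ≠ 0} := by
    intro y hy
    intro h0
    have hyb : y ∈ ball z r := (hρ hy).1
    have : h y = h z := hpoint y hyb h0
    have : |h y - h x| < |h x - h z| := (hρ hy).2
    rw [‹h y = h z›] at this
    rw [abs_sub_comm] at this
    exact lt_irrefl _ this
  have : volume {y : Euc N | volume (Prod.mk y ⁻¹' Bad) ≠ 0} = 0 := by
    rw [Filter.eventually_iff, mem_ae_iff] at hgood
    refine measure_mono_null (fun y hy => ?_) hgood
    exact hy
  have hb0 : volume (ball x ρ) = 0 := measure_mono_null hsub this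
  exact absurd hb0 (ne_of_gt (measure_ball_pos _ _ hρ0))

/-- A nonnegative Lipschitz function vanishing on the boundary with a.e. zero
gradient vanishes identically on a bounded open set. -/
lemma lemC {N : ℕ} (hN : 1 ≤ N) {Ωs : Set (Euc N)} (hΩo : IsOpen Ωs)
    (hΩb : Bornology.IsBounded Ωs)
    {h : Euc N → ℝ} {K : ℝ≥0} (hLip : LipschitzOnWith K h (closure Ωs))
    (hfr : ∀ x ∈ frontier Ωs, h x = 0) (hnn : ∀ x, 0 ≤ h x)
    (hae : ∀ᵐ x ∂(volume.restrict Ωs), DifferentiableAt ℝ h x ∧ fderiv ℝ h x = 0) :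
    ∀ x ∈ Ωs, h x = 0 := by
  intro x₀ hx₀
  by_contra hne
  have hc : 0 < h x₀ := lt_of_le_of_ne (hnn x₀) (Ne.symm hne)
  set c : ℝ := h x₀ with hcdef
  set T : Set (Euc N) := closure Ωs ∩ h ⁻¹' Ici c with hT
  have hmemΩ : ∀ x ∈ T, x ∈ Ωs := by
    intro x hx
    by_contra hxo
    have hxf : x ∈ frontier Ωs := by
      rw [frontier, hΩo.interior_eq]
      exact ⟨hx.1, hxo⟩
    have := hfr x hxf
    have := hx.2
    simp only [mem_preimage, mem_Ici] at this
    linarith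
  have hTclosed : IsClosed T := by
    apply ContinuousOn.preimage_isClosed_of_isClosed hLip.continuousOn isClosed_closure
    exact isClosed_Ici
  have hTopen : IsOpen T := by
    rw [isOpen_iff_mem_nhds]
    intro x hx
    have hxΩ : x ∈ Ωs := hmemΩ x hx
    obtain ⟨r, hr0, hrball⟩ := Metric.isOpen_iff.mp hΩo x hxΩ
    have hconst := ball_const hΩo hLip hae hr0 hrball
    rw [Metric.mem_nhds_iff]
    refine ⟨r, hr0, fun y hy => ?_⟩
    refine ⟨subset_closure (hrball hy), ?_⟩
    simp only [mem_preimage, mem_Ici]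
    rw [hconst y hy, ← hconst x (mem_ball_self hr0)]
    exact hx.2
  have hclopen : IsClopen T := ⟨hTclosed, hTopen⟩
  rcases isClopen_iff.mp hclopen with hempty | huniv
  · have : x₀ ∈ T := ⟨subset_closure hx₀, by simp [mem_preimage, hcdef]⟩
    rw [hempty] at this
    exact this
  · -- T = univ contradicts boundedness
    have hbd : Bornology.IsBounded (univ : Set (Euc N)) := by
      rw [← huniv]
      exact hΩb.closure.subset (by rw [hT]; exact inter_subset_left)
    obtain ⟨C, hC⟩ := (Metric.isBounded_iff_subset_closedBall 0).mp hbd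
    set i : Fin N := ⟨0, by omega⟩
    set v : Euc N := EuclideanSpace.single i ((C+1) ⊔ 1) with hv
    have hvn : ‖v‖ = (C+1) ⊔ 1 := by
      rw [hv, EuclideanSpace.norm_single]
      exact abs_of_pos (lt_sup_iff.mpr (Or.inr one_pos))
    have := hC (mem_univ v)
    rw [Metric.mem_closedBall, dist_zero_right, hvn] at this
    have h1 : (C+1) ⊔ 1 ≤ C := this
    have h2 : C + 1 ≤ C := le_trans (le_sup_left) h1
    linarith
lemma lipOn_max {α : Type*} [PseudoMetricSpace α] {f g : α → ℝ} {s : Set α} {K₁ K₂ : ℝ≥0}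
    (h₁ : LipschitzOnWith K₁ f s) (h₂ : LipschitzOnWith K₂ g s) :
    LipschitzOnWith (K₁ ⊔ K₂) (fun y => max (f y) (g y)) s := by
  rw [lipschitzOnWith_iff_dist_le_mul] at *
  intro x hx y hy
  calc dist (max (f x) (g x)) (max (f y) (g y)) ≤ max (dist (f x) (f y)) (dist (g x) (g y)) := by
        rw [Real.dist_eq, Real.dist_eq, Real.dist_eq]; exact abs_max_sub_max_le_max _ _ _ _
  _ ≤ ((K₁ ⊔ K₂ : ℝ≥0) : ℝ) * dist x y := by
    apply max_le
    · exact le_trans (h₁ x hx y hy) (mul_le_mul_of_nonneg_right (by exact_mod_cast le_sup_left) dist_nonneg)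
    · exact le_trans (h₂ x hx y hy) (mul_le_mul_of_nonneg_right (by exact_mod_cast le_sup_right) dist_nonneg)

lemma lipOn_min {α : Type*} [PseudoMetricSpace α] {f g : α → ℝ} {s : Set α} {K₁ K₂ : ℝ≥0}
    (h₁ : LipschitzOnWith K₁ f s) (h₂ : LipschitzOnWith K₂ g s) :
    LipschitzOnWith (K₁ ⊔ K₂) (fun y => min (f y) (g y)) s := by
  rw [lipschitzOnWith_iff_dist_le_mul] at *
  intro x hx y hy
  calc dist (min (f x) (g x)) (min (f y) (g y)) ≤ max (dist (f x) (f y)) (dist (g x) (g y)) := by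
        rw [Real.dist_eq, Real.dist_eq, Real.dist_eq]; exact abs_min_sub_min_le_max _ _ _ _
  _ ≤ ((K₁ ⊔ K₂ : ℝ≥0) : ℝ) * dist x y := by
    apply max_le
    · exact le_trans (h₁ x hx y hy) (mul_le_mul_of_nonneg_right (by exact_mod_cast le_sup_left) dist_nonneg)
    · exact le_trans (h₂ x hx y hy) (mul_le_mul_of_nonneg_right (by exact_mod_cast le_sup_right) dist_nonneg)

lemma lipOn_sub {α : Type*} [PseudoMetricSpace α] {f g : α → ℝ} {s : Set α} {K₁ K₂ : ℝ≥0}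
    (h₁ : LipschitzOnWith K₁ f s) (h₂ : LipschitzOnWith K₂ g s) :
    LipschitzOnWith (K₁ + K₂) (fun y => f y - g y) s := by
  rw [lipschitzOnWith_iff_dist_le_mul] at *
  intro x hx y hy
  have e : f x - g x - (f y - g y) = (f x - f y) - (g x - g y) := by ring
  calc dist (f x - g x) (f y - g y) ≤ dist (f x) (f y) + dist (g x) (g y) := by
        rw [Real.dist_eq, Real.dist_eq, Real.dist_eq, e]; exact abs_sub _ _
  _ ≤ ((K₁ + K₂ : ℝ≥0) : ℝ) * dist x y := by
    rw [NNReal.coe_add, add_mul]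
    exact add_le_add (h₁ x hx y hy) (h₂ x hx y hy)

lemma lipOn_avg {α : Type*} [PseudoMetricSpace α] {f g : α → ℝ} {s : Set α} {K₁ K₂ : ℝ≥0}
    (h₁ : LipschitzOnWith K₁ f s) (h₂ : LipschitzOnWith K₂ g s) :
    LipschitzOnWith (K₁ + K₂) (fun y => 2⁻¹ * (f y + g y)) s := by
  rw [lipschitzOnWith_iff_dist_le_mul] at *
  intro x hx y hy
  have e : 2⁻¹ * (f x + g x) - 2⁻¹ * (f y + g y) = 2⁻¹ * ((f x - f y) + (g x - g y)) := by ring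
  rw [Real.dist_eq, e, abs_mul]
  have h3 : |(f x - f y) + (g x - g y)| ≤ dist (f x) (f y) + dist (g x) (g y) := by
    rw [Real.dist_eq, Real.dist_eq]; exact abs_add_le _ _
  have h4 : dist (f x) (f y) + dist (g x) (g y) ≤ ((K₁ + K₂ : ℝ≥0) : ℝ) * dist x y := by
    rw [NNReal.coe_add, add_mul]; exact add_le_add (h₁ x hx y hy) (h₂ x hx y hy)
  calc |(2:ℝ)⁻¹| * |(f x - f y) + (g x - g y)| ≤ 1 * (((K₁ + K₂ : ℝ≥0) : ℝ) * dist x y) := by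
        apply mul_le_mul (by rw [abs_of_pos]; norm_num; norm_num) (le_trans h3 h4) (abs_nonneg _)
        positivity
  _ = ((K₁ + K₂ : ℝ≥0) : ℝ) * dist x y := one_mul _

/-- The key pointwise analysis at a point of differentiability of `f` and `g`. -/
lemma max_min_grad {N : ℕ} {f g : Euc N → ℝ} {x : Euc N}
    (hfc : ContinuousAt f x) (hgc : ContinuousAt g x)
    (hfd : DifferentiableAt ℝ f x) (hgd : DifferentiableAt ℝ g x)
    (hf1 : ‖fderiv ℝ f x‖ ≤ 1) (hg1 : ‖fderiv ℝ g x‖ ≤ 1) :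
    ‖fderiv ℝ (fun y => max (f y) (g y)) x‖ ≤ 1 ∧
    ‖fderiv ℝ (fun y => min (f y) (g y)) x‖ ≤ 1 ∧
    (Real.sqrt (1 - ‖fderiv ℝ f x‖^2) + Real.sqrt (1 - ‖fderiv ℝ g x‖^2)
      ≤ Real.sqrt (1 - ‖fderiv ℝ (fun y => max (f y) (g y)) x‖^2)
        + Real.sqrt (1 - ‖fderiv ℝ (fun y => min (f y) (g y)) x‖^2)) := by
  set F : Euc N → ℝ := fun y => max (f y) (g y) with hF
  set G : Euc N → ℝ := fun y => min (f y) (g y) with hGdef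
  rcases lt_trichotomy (f x) (g x) with hlt | heq | hgt
  · -- f x < g x : F = g, G = f near x
    have hev : ∀ᶠ y in 𝓝 x, f y < g y := hfc.eventually_lt hgc hlt
    have hFg : F =ᶠ[𝓝 x] g := hev.mono fun y hy => max_eq_right hy.le
    have hGf : G =ᶠ[𝓝 x] f := hev.mono fun y hy => min_eq_left hy.le
    rw [hFg.fderiv_eq, hGf.fderiv_eq]
    exact ⟨hg1, hf1, by linarith⟩
  · -- f x = g x
    have hFf : DifferentiableAt ℝ F x → fderiv ℝ F x = fderiv ℝ f x := by
      intro hFd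
      have hmin : IsLocalMin (fun y => F y - f y) x := by
        apply Filter.Eventually.of_forall
        intro y
        have hx0 : F x = f x := by simp only [hF]; rw [heq, max_self]
        show F x - f x ≤ F y - f y
        rw [hx0, sub_self]
        have : f y ≤ F y := le_max_left _ _
        linarith
      have h0 := hmin.fderiv_eq_zero
      rw [fderiv_fun_sub hFd hfd] at h0
      exact sub_eq_zero.mp h0
    have hGg : DifferentiableAt ℝ G x → fderiv ℝ G x = fderiv ℝ g x := by
      intro hGd
      have hmin : IsLocalMin (fun y => g y - G y) x := by
        apply Filter.Eventually.of_forall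
        intro y
        simp only [hGdef]
        have h1 : min (f x) (g x) ≤ g x := min_le_right _ _
        have h2 : min (f y) (g y) ≤ g y := min_le_right _ _
        have h3 : min (f x) (g x) = g x := by rw [heq, min_self]
        simp only [h3]
        linarith
      have h0 := hmin.fderiv_eq_zero
      rw [fderiv_fun_sub hgd hGd] at h0
      have := sub_eq_zero.mp h0
      exact this.symm
    have hSf : Real.sqrt (1 - ‖fderiv ℝ f x‖^2) ≤ 1 := sqrt_one_sub_le_one (sq_nonneg _)
    have hSg : Real.sqrt (1 - ‖fderiv ℝ g x‖^2) ≤ 1 := sqrt_one_sub_le_one (sq_nonneg _)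
    have hFbound : ‖fderiv ℝ F x‖ ≤ 1 := by
      by_cases hFd : DifferentiableAt ℝ F x
      · rw [hFf hFd]; exact hf1
      · rw [fderiv_zero_of_not_differentiableAt hFd]; simp
    have hGbound : ‖fderiv ℝ G x‖ ≤ 1 := by
      by_cases hGd : DifferentiableAt ℝ G x
      · rw [hGg hGd]; exact hg1
      · rw [fderiv_zero_of_not_differentiableAt hGd]; simp
    refine ⟨hFbound, hGbound, ?_⟩
    by_cases hFd : DifferentiableAt ℝ F x <;> by_cases hGd : DifferentiableAt ℝ G x
    · rw [hFf hFd, hGg hGd]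
    · rw [hFf hFd, fderiv_zero_of_not_differentiableAt hGd]
      simp only [norm_zero]
      norm_num
      try linarith [hSf, hSg]
    · rw [hGg hGd, fderiv_zero_of_not_differentiableAt hFd]
      simp only [norm_zero]
      norm_num
      try linarith [hSf, hSg]
    · rw [fderiv_zero_of_not_differentiableAt hFd, fderiv_zero_of_not_differentiableAt hGd]
      simp only [norm_zero]
      norm_num
      try linarith [hSf, hSg]
  · -- g x < f x : F = f, G = g near x
    have hev : ∀ᶠ y in 𝓝 x, g y < f y := hgc.eventually_lt hfc hgt
    have hFg : F =ᶠ[𝓝 x] f := hev.mono fun y hy => max_eq_left hy.le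
    have hGf : G =ᶠ[𝓝 x] g := hev.mono fun y hy => min_eq_right hy.le
    rw [hFg.fderiv_eq, hGf.fderiv_eq]
    exact ⟨hf1, hg1, le_refl _⟩

lemma meas_S {N : ℕ} (v : Euc N → ℝ) :
    Measurable (fun x : Euc N => Real.sqrt (1 - ‖gradient v x‖ ^ 2)) := by
  have h2 : Measurable (fun x : Euc N => ‖fderiv ℝ v x‖) := (measurable_fderiv ℝ v).norm
  have he : (fun x : Euc N => Real.sqrt (1 - ‖gradient v x‖ ^ 2))
      = fun x => Real.sqrt (1 - ‖fderiv ℝ v x‖ ^ 2) := by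
    funext x; rw [grad_norm]
  rw [he]
  exact Real.continuous_sqrt.measurable.comp (measurable_const.sub (h2.pow_const 2))

lemma int_S {N : ℕ} {Ωs : Set (Euc N)} (hΩb : Bornology.IsBounded Ωs) (v : Euc N → ℝ) :
    IntegrableOn (fun x : Euc N => Real.sqrt (1 - ‖gradient v x‖ ^ 2)) Ωs volume := by
  have hfin : volume Ωs < ⊤ :=
    lt_of_le_of_lt (measure_mono subset_closure) hΩb.isCompact_closure.measure_lt_top
  haveI : IsFiniteMeasure (volume.restrict Ωs) :=
    ⟨by rwa [Measure.restrict_apply_univ]⟩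
  apply Integrable.mono' (integrable_const (1:ℝ))
  · exact (meas_S v).aestronglyMeasurable
  · apply Filter.Eventually.of_forall
    intro x
    rw [Real.norm_eq_abs, abs_of_nonneg (Real.sqrt_nonneg _)]
    exact sqrt_one_sub_le_one (sq_nonneg _)

lemma int_cont {N : ℕ} {Ωs : Set (Euc N)} (hΩo : IsOpen Ωs) (hΩb : Bornology.IsBounded Ωs)
    (H : Measure (Euc N)) [IsFiniteMeasure H]
    {u : Euc N → ℝ} (hu : ContinuousOn u (closure Ωs)) : IntegrableOn u Ωs H := by
  obtain ⟨C, hC⟩ := hΩb.isCompact_closure.exists_bound_of_continuousOn hu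
  apply Integrable.mono' (integrable_const C)
  · exact (hu.mono subset_closure).aestronglyMeasurable hΩo.measurableSet
  · rw [ae_restrict_iff' hΩo.measurableSet]
    exact Filter.Eventually.of_forall fun x hx => hC x (subset_closure hx)

lemma rade {N : ℕ} {Ωs : Set (Euc N)} (hΩo : IsOpen Ωs) {v : Euc N → ℝ} {K : ℝ≥0}
    (h : LipschitzOnWith K v (closure Ωs)) :
    ∀ᵐ x ∂(volume.restrict Ωs), DifferentiableAt ℝ v x := by
  have h1 := h.ae_differentiableWithinAt_of_mem (μ := (volume : Measure (Euc N)))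
  rw [ae_restrict_iff' hΩo.measurableSet]
  filter_upwards [h1] with x hx hxΩ
  exact (hx (subset_closure hxΩ)).differentiableAt
    (Filter.mem_of_superset (hΩo.mem_nhds hxΩ) subset_closure)

lemma grad_avg {N : ℕ} {f g : Euc N → ℝ} {x : Euc N}
    (hf : DifferentiableAt ℝ f x) (hg : DifferentiableAt ℝ g x) :
    gradient (fun y => 2⁻¹ * (f y + g y)) x = (2⁻¹:ℝ) • (gradient f x + gradient g x) := by
  unfold gradient
  rw [fderiv_const_mul (hf.fun_add hg), fderiv_fun_add hf hg, _root_.map_smul, _root_.map_add]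

lemma grad_eq_fderiv_eq {N : ℕ} {f g : Euc N → ℝ} {x y : Euc N}
    (h : gradient f x = gradient g y) : fderiv ℝ f x = fderiv ℝ g y := by
  unfold gradient at h
  have := congrArg (InnerProductSpace.toDual ℝ (Euc N)) h
  rwa [LinearIsometryEquiv.apply_symm_apply, LinearIsometryEquiv.apply_symm_apply] at this

end AuxComparison

set_option maxHeartbeats 1000000 in
/-- Lemma 2.2, comparison principle for maximizers with measure data. -/
theorem statement4 (N : ℕ) (hN : 2 ≤ N) (Ω : Set (Euc N))
    (hΩo : IsOpen Ω) (hΩb : Bornology.IsBounded Ω) (hΩne : Ω.Nonempty)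
    (H₁ H₂ : Measure (Euc N)) [IsFiniteMeasure H₁] [IsFiniteMeasure H₂]
    (hH : ∀ ξ : Euc N → ℝ, ContinuousOn ξ (closure Ω) → (∀ x ∈ closure Ω, 0 ≤ ξ x) →
      ∫ x in Ω, ξ x ∂H₂ ≤ ∫ x in Ω, ξ x ∂H₁)
    (w₁ w₂ : Euc N → ℝ)
    (hw₁ : ∃ K : ℝ≥0, LipschitzOnWith K w₁ (closure Ω))
    (hw₂ : ∃ K : ℝ≥0, LipschitzOnWith K w₂ (closure Ω))
    (hw : ∀ x ∈ closure Ω, w₂ x ≤ w₁ x)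
    (u₁ u₂ : Euc N → ℝ)
    (hu₁ : u₁ ∈ Xw Ω w₁ ∧ ∀ v ∈ Xw Ω w₁, Ifun Ω H₁ v ≤ Ifun Ω H₁ u₁)
    (hu₂ : u₂ ∈ Xw Ω w₂ ∧ ∀ v ∈ Xw Ω w₂, Ifun Ω H₂ v ≤ Ifun Ω H₂ u₂) :
    ∀ x ∈ Ω, u₂ x ≤ u₁ x := by
  classical
  obtain ⟨⟨K₁, hK₁⟩, hb₁, hg₁⟩ := hu₁.1
  obtain ⟨⟨K₂, hK₂⟩, hb₂, hg₂⟩ := hu₂.1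
  set S : (Euc N → ℝ) → Euc N → ℝ := fun v x => Real.sqrt (1 - ‖gradient v x‖ ^ 2) with hSdef
  set m : Euc N → ℝ := fun y => max (u₁ y) (u₂ y) with hm
  set n : Euc N → ℝ := fun y => min (u₁ y) (u₂ y) with hn
  set φ : Euc N → ℝ := fun y => m y - u₁ y with hφ
  have hKm : LipschitzOnWith (K₁ ⊔ K₂) m (closure Ω) := lipOn_max hK₁ hK₂
  have hKn : LipschitzOnWith (K₁ ⊔ K₂) n (closure Ω) := lipOn_min hK₁ hK₂
  have hKφ : LipschitzOnWith ((K₁ ⊔ K₂) + K₁) φ (closure Ω) := lipOn_sub hKm hK₁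
  have hmeasΩ := hΩo.measurableSet
  -- boundary values
  have hbm : ∀ x ∈ frontier Ω, m x = w₁ x := by
    intro x hx
    have hxc : x ∈ closure Ω := frontier_subset_closure hx
    show max (u₁ x) (u₂ x) = w₁ x
    rw [hb₁ x hx, hb₂ x hx]; exact max_eq_left (hw x hxc)
  have hbn : ∀ x ∈ frontier Ω, n x = w₂ x := by
    intro x hx
    have hxc : x ∈ closure Ω := frontier_subset_closure hx
    show min (u₁ x) (u₂ x) = w₂ x
    rw [hb₁ x hx, hb₂ x hx]; exact min_eq_right (hw x hxc)
  -- a.e. pointwise facts for max/min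
  have hd1 := rade hΩo hK₁
  have hd2 := rade hΩo hK₂
  have hdm := rade hΩo hKm
  have hmemae : ∀ᵐ x ∂(volume.restrict Ω), x ∈ Ω := ae_restrict_mem hmeasΩ
  have hptwise : ∀ᵐ x ∂(volume.restrict Ω),
      ‖gradient m x‖ ≤ 1 ∧ ‖gradient n x‖ ≤ 1 ∧
        S u₁ x + S u₂ x ≤ S m x + S n x := by
    filter_upwards [hd1, hd2, hg₁, hg₂, hmemae] with x h1 h2 h3 h4 hxΩ
    have hc1 : ContinuousAt u₁ x :=
      (hK₁.continuousOn.mono subset_closure).continuousAt (hΩo.mem_nhds hxΩ)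
    have hc2 : ContinuousAt u₂ x :=
      (hK₂.continuousOn.mono subset_closure).continuousAt (hΩo.mem_nhds hxΩ)
    rw [grad_norm] at h3 h4
    obtain ⟨hA, hB, hC⟩ := max_min_grad hc1 hc2 h1 h2 h3 h4
    refine ⟨by rw [grad_norm]; exact hA, by rw [grad_norm]; exact hB, ?_⟩
    simp only [hSdef]
    rw [grad_norm, grad_norm, grad_norm, grad_norm]
    exact hC
  -- membership of the max and min in the competitor classes
  have hmX : m ∈ Xw Ω w₁ := by
    refine ⟨⟨K₁ ⊔ K₂, hKm⟩, hbm, ?_⟩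
    filter_upwards [hptwise] with x hx using hx.1
  have hnX : n ∈ Xw Ω w₂ := by
    refine ⟨⟨K₁ ⊔ K₂, hKn⟩, hbn, ?_⟩
    filter_upwards [hptwise] with x hx using hx.2.1
  -- energy comparison
  have hint1 := int_S hΩb u₁
  have hint2 := int_S hΩb u₂
  have hintm := int_S hΩb m
  have hintn := int_S hΩb n
  have hE : (∫ x in Ω, S u₁ x) + (∫ x in Ω, S u₂ x) ≤ (∫ x in Ω, S m x) + (∫ x in Ω, S n x) := by
    rw [← integral_add hint1 hint2, ← integral_add hintm hintn]
    apply integral_mono_ae (hint1.add hint2) (hintm.add hintn)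
    filter_upwards [hptwise] with x hx using hx.2.2
  -- measure terms
  have hIu1 : IntegrableOn u₁ Ω H₁ := int_cont hΩo hΩb H₁ hK₁.continuousOn
  have hIφ1 : IntegrableOn φ Ω H₁ := int_cont hΩo hΩb H₁ hKφ.continuousOn
  have hIu2 : IntegrableOn u₂ Ω H₂ := int_cont hΩo hΩb H₂ hK₂.continuousOn
  have hIφ2 : IntegrableOn φ Ω H₂ := int_cont hΩo hΩb H₂ hKφ.continuousOn
  have hφnn : ∀ y, 0 ≤ φ y := fun y => sub_nonneg.mpr (le_max_left _ _)
  have hMm : (∫ x in Ω, m x ∂H₁) = (∫ x in Ω, u₁ x ∂H₁) + ∫ x in Ω, φ x ∂H₁ := by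
    rw [← integral_add hIu1 hIφ1]
    congr 1
    funext x
    simp only [hφ]
    ring
  have hMn : (∫ x in Ω, n x ∂H₂) = (∫ x in Ω, u₂ x ∂H₂) - ∫ x in Ω, φ x ∂H₂ := by
    rw [← integral_sub hIu2 hIφ2]
    congr 1
    funext x
    simp only [hφ, hn, hm]
    have := max_add_min (u₁ x) (u₂ x)
    linarith
  have hP : (∫ x in Ω, φ x ∂H₂) ≤ ∫ x in Ω, φ x ∂H₁ :=
    hH φ hKφ.continuousOn (fun x _ => hφnn x)
  -- maximality
  have hIm := hu₁.2 m hmX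
  have hIn := hu₂.2 n hnX
  rw [Ifun, Ifun] at hIm hIn
  rw [hMm] at hIm
  rw [hMn] at hIn
  -- conclude the energy/measure equalities
  have hIfeq : (∫ x in Ω, S m x) + (∫ x in Ω, m x ∂H₁)
      = (∫ x in Ω, S u₁ x) + (∫ x in Ω, u₁ x ∂H₁) := by
    simp only [hSdef] at hE hIm hIn ⊢
    rw [hMm]
    linarith
  -- the midpoint competitor
  set q : Euc N → ℝ := fun y => 2⁻¹ * (u₁ y + m y) with hq
  have hKq : LipschitzOnWith (K₁ + (K₁ ⊔ K₂)) q (closure Ω) := lipOn_avg hK₁ hKm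
  have hgm : ∀ᵐ x ∂(volume.restrict Ω), ‖gradient m x‖ ≤ 1 := by
    filter_upwards [hptwise] with x hx using hx.1
  have hqgrad : ∀ᵐ x ∂(volume.restrict Ω),
      gradient q x = (2⁻¹:ℝ) • (gradient u₁ x + gradient m x) := by
    filter_upwards [hd1, hdm] with x h1 h2 using grad_avg h1 h2
  have hqX : q ∈ Xw Ω w₁ := by
    refine ⟨⟨K₁ + (K₁ ⊔ K₂), hKq⟩, ?_, ?_⟩
    · intro x hx
      show 2⁻¹ * (u₁ x + m x) = w₁ x
      rw [hb₁ x hx, hbm x hx]; ring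
    · filter_upwards [hqgrad, hg₁, hgm] with x he h1 h2
      rw [he, norm_smul]
      have := norm_add_le (gradient u₁ x) (gradient m x)
      rw [Real.norm_eq_abs]
      have h4 : |(2:ℝ)⁻¹| = 2⁻¹ := by norm_num
      rw [h4]
      nlinarith [norm_nonneg (gradient u₁ x + gradient m x)]
  have hconc : ∀ᵐ x ∂(volume.restrict Ω), 2⁻¹ * (S u₁ x + S m x) ≤ S q x := by
    filter_upwards [hqgrad, hg₁, hgm] with x he h1 h2
    have := key_ineq (gradient u₁ x) (gradient m x) h1 h2
    simp only [hSdef]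
    rw [he]
    calc 2⁻¹ * (Real.sqrt (1 - ‖gradient u₁ x‖ ^ 2) + Real.sqrt (1 - ‖gradient m x‖ ^ 2))
        = (Real.sqrt (1 - ‖gradient u₁ x‖ ^ 2) + Real.sqrt (1 - ‖gradient m x‖ ^ 2))/2 := by ring
    _ ≤ _ := this
  have hintq := int_S hΩb q
  have hIq := hu₁.2 q hqX
  rw [Ifun, Ifun] at hIq
  have hMq : (∫ x in Ω, q x ∂H₁)
      = 2⁻¹ * ((∫ x in Ω, u₁ x ∂H₁) + (∫ x in Ω, m x ∂H₁)) := by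
    have hIm1 : IntegrableOn m Ω H₁ := int_cont hΩo hΩb H₁ hKm.continuousOn
    rw [← integral_add hIu1 hIm1, ← integral_const_mul]
  have hEq : (∫ x in Ω, S q x) = 2⁻¹ * ((∫ x in Ω, S u₁ x) + (∫ x in Ω, S m x)) := by
    have hle1 : 2⁻¹ * ((∫ x in Ω, S u₁ x) + (∫ x in Ω, S m x)) ≤ ∫ x in Ω, S q x := by
      rw [← integral_add hint1 hintm, ← integral_const_mul]
      apply integral_mono_ae ((hint1.add hintm).const_mul _) hintq hconc
    have hle2 : (∫ x in Ω, S q x) ≤ 2⁻¹ * ((∫ x in Ω, S u₁ x) + (∫ x in Ω, S m x)) := by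
      simp only [hSdef] at hIq hIfeq ⊢
      rw [hMq] at hIq
      linarith
    linarith
  -- gap vanishes a.e.
  set gap : Euc N → ℝ := fun x => S q x - 2⁻¹ * (S u₁ x + S m x) with hgap
  have hgapint : IntegrableOn gap Ω volume := by
    apply Integrable.sub hintq
    exact ((hint1.add hintm).const_mul _)
  have hgapzero : ∫ x in Ω, gap x = 0 := by
    have e2 : (∫ x in Ω, (2⁻¹ : ℝ) * (S u₁ x + S m x))
        = 2⁻¹ * ((∫ x in Ω, S u₁ x) + (∫ x in Ω, S m x)) := by
      rw [integral_const_mul, integral_add hint1 hintm]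
    have e3 : (∫ x in Ω, (S q x - 2⁻¹ * (S u₁ x + S m x)))
        = (∫ x in Ω, S q x) - ∫ x in Ω, (2⁻¹:ℝ) * (S u₁ x + S m x) :=
      integral_sub hintq ((hint1.add hintm).const_mul _)
    calc (∫ x in Ω, gap x) = (∫ x in Ω, (S q x - 2⁻¹ * (S u₁ x + S m x))) := rfl
    _ = (∫ x in Ω, S q x) - ∫ x in Ω, (2⁻¹:ℝ) * (S u₁ x + S m x) := e3
    _ = 0 := by rw [e2, hEq]; ring
  have hgapae : gap =ᶠ[ae (volume.restrict Ω)] 0 := by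
    rw [← integral_eq_zero_iff_of_nonneg_ae ?_ hgapint]
    · exact hgapzero
    · filter_upwards [hconc] with x hx
      simp only [hgap, Pi.zero_apply]
      linarith
  -- conclude fderiv m = fderiv u₁ a.e.
  have hfdφ : ∀ᵐ x ∂(volume.restrict Ω), DifferentiableAt ℝ φ x ∧ fderiv ℝ φ x = 0 := by
    filter_upwards [hd1, hdm, hg₁, hgm, hgapae, hqgrad] with x h1 h2 h3 h4 h5 h6
    have heq0 : S q x = 2⁻¹ * (S u₁ x + S m x) := by
      have : gap x = 0 := h5
      simp only [hgap] at this
      linarith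
    have hkey : gradient u₁ x = gradient m x := by
      apply key_eq (gradient u₁ x) (gradient m x) h3 h4
      simp only [hSdef] at heq0
      rw [h6] at heq0
      rw [heq0]; ring
    have hfd : fderiv ℝ u₁ x = fderiv ℝ m x := grad_eq_fderiv_eq hkey
    refine ⟨h2.sub h1, ?_⟩
    have : fderiv ℝ φ x = fderiv ℝ m x - fderiv ℝ u₁ x := fderiv_fun_sub h2 h1
    rw [this, hfd, sub_self]
  -- the comparison
  have hfrφ : ∀ x ∈ frontier Ω, φ x = 0 := by
    intro x hx
    show m x - u₁ x = 0
    rw [hbm x hx, hb₁ x hx, sub_self]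
  have hfinal := lemC (by omega : 1 ≤ N) hΩo hΩb hKφ hfrφ hφnn hfdφ
  intro x hx
  have h0 : m x - u₁ x = 0 := hfinal x hx
  have h1 : u₂ x ≤ m x := le_max_right _ _
  linarith
end
end

section
/- Let N ≥ 2, let P = {p_1, …, p_{m_0}} be a finite set of distinct points in B_R(0), and let u ∈ C^{0,1}(B_R(0)) satisfy |∇u| < 1 a.e. and |∇u|/√(1 − |∇u|²) ∈ L¹(B_R(0)). Suppose the distribution 𝒯(ξ) = ∫_{B_R(0)} ∇u·∇ξ / √(1 − |∇u|²) dx vanishes on all test functions supported in B_R(0) ∖ P, so that by Schwartz's theorem 𝒯 = Σ_{j=1}^{m_0} Σ_{|a| ≤ N_j} k_{p_j,a} D^a δ_{p_j} for some integers N_j and coefficients k_{p_j,a} ∈ ℝ, where a ranges over multi-indices. Then k_{p_j,a} = 0 for every multi-index a with |a| ≥ 1 and every j. -/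
set_option maxHeartbeats 1000000


open MeasureTheory Real Filter Topology Metric
open scoped NNReal

noncomputable section

def mono {N : ℕ} (p : Euc N) (a : Fin N → ℕ) (x : Euc N) : ℝ :=
  ∏ i, (x i - p i) ^ (a i)

lemma mono_hasFDerivAt {N : ℕ} (p : Euc N) (a : Fin N → ℕ) (x : Euc N) :
    HasFDerivAt (mono p a)
      (∑ i : Fin N, ((Finset.univ.erase i).prod (fun j => (x j - p j) ^ (a j)))
        • ((a i * (x i - p i) ^ (a i - 1)) • (EuclideanSpace.proj i : Euc N →L[ℝ] ℝ))) x := by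
  have h : ∀ i ∈ Finset.univ, HasFDerivAt (fun y : Euc N => (y i - p i) ^ (a i))
      ((a i * (x i - p i) ^ (a i - 1)) • (EuclideanSpace.proj i : Euc N →L[ℝ] ℝ)) x := by
    intro i _
    have h1 : HasFDerivAt (fun y : Euc N => y i - p i)
        (EuclideanSpace.proj i : Euc N →L[ℝ] ℝ) x := by
      have := ((EuclideanSpace.proj i : Euc N →L[ℝ] ℝ).hasFDerivAt (x := x)).sub_const (p i)
      exact this
    exact (hasDerivAt_pow (a i) (x i - p i)).comp_hasFDerivAt x h1
  exact HasFDerivAt.finset_prod h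

lemma contDiff_mono {N : ℕ} (p : Euc N) (a : Fin N → ℕ) :
    ContDiff ℝ (⊤ : ℕ∞) (mono p a) := by
  apply contDiff_prod
  intro i _
  exact (((EuclideanSpace.proj i : Euc N →L[ℝ] ℝ).contDiff).sub contDiff_const).pow _

lemma mono_update_eq {N : ℕ} (p : Euc N) (a : Fin N → ℕ) (i : Fin N) (m : ℕ) (x : Euc N) :
    mono p (Function.update a i m) x
      = (x i - p i) ^ m * ∏ j ∈ Finset.univ.erase i, (x j - p j) ^ (a j) := by
  rw [mono, ← Finset.mul_prod_erase Finset.univ _ (Finset.mem_univ i)]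
  rw [Function.update_self]
  congr 1
  exact Finset.prod_congr rfl fun j hj => by
    rw [Function.update_of_ne (Finset.ne_of_mem_erase hj)]

lemma dirDeriv_mono {N : ℕ} (p : Euc N) (a : Fin N → ℕ) (i : Fin N) (x : Euc N) :
    dirDeriv i (mono p a) x = (a i : ℝ) * mono p (Function.update a i (a i - 1)) x := by
  rw [dirDeriv, (mono_hasFDerivAt p a x).fderiv]
  rw [ContinuousLinearMap.sum_apply]
  rw [Finset.sum_eq_single i]
  · simp only [ContinuousLinearMap.smul_apply, EuclideanSpace.proj, PiLp.proj_apply,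
      EuclideanSpace.single_apply, if_pos rfl, if_true, smul_eq_mul, mul_one]
    rw [mono_update_eq]
    ring
  · intro j _ hj
    simp only [ContinuousLinearMap.smul_apply, EuclideanSpace.proj, PiLp.proj_apply,
      EuclideanSpace.single_apply, smul_eq_mul]
    rw [if_neg hj]
    ring
  · intro h; exact absurd (Finset.mem_univ i) h

lemma dirDeriv_const_mul_mono {N : ℕ} (p : Euc N) (a : Fin N → ℕ) (i : Fin N) (c : ℝ) :
    dirDeriv i (fun x => c * mono p a x)
      = fun x => (c * (a i)) * mono p (Function.update a i (a i - 1)) x := by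
  funext x
  have hd : DifferentiableAt ℝ (mono p a) x :=
    ((contDiff_mono p a).differentiable (by simp)).differentiableAt
  rw [dirDeriv, fderiv_const_mul hd c]
  have := dirDeriv_mono p a i x
  rw [dirDeriv] at this
  simp only [ContinuousLinearMap.smul_apply, smul_eq_mul, this]
  ring

lemma iter_dirDeriv_mono {N : ℕ} (p : Euc N) (i : Fin N) (n : ℕ) :
    ∀ (c : ℝ) (a : Fin N → ℕ),
    (fun h => dirDeriv i h)^[n] (fun x => c * mono p a x)
      = fun x => (c * ((a i).descFactorial n)) * mono p (Function.update a i (a i - n)) x := by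
  induction n with
  | zero =>
    intro c a
    simp only [Function.iterate_zero, id_eq, Nat.descFactorial_zero, Nat.cast_one, mul_one,
      Nat.sub_zero]
    funext x
    rw [Function.update_eq_self]
  | succ n ih =>
    intro c a
    rw [Function.iterate_succ_apply', ih c a, dirDeriv_const_mul_mono]
    funext x
    rw [Function.update_idem, Function.update_self]
    have hcast : ((a i).descFactorial (n+1) : ℝ) = ((a i).descFactorial n : ℝ) * ((a i - n : ℕ) : ℝ) := by
      rw [Nat.descFactorial_succ]; push_cast; ring
    rw [hcast]
    have : a i - n - 1 = a i - (n + 1) := by omega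
    rw [this]
    ring

lemma foldr_mono {N : ℕ} (p : Euc N) (b : Fin N → ℕ) :
    ∀ (L : List (Fin N)), L.Nodup → ∀ (c : ℝ) (a : Fin N → ℕ),
    L.foldr (fun i g => (fun h => dirDeriv i h)^[b i] g) (fun x => c * mono p a x)
      = fun x => (c * ∏ i ∈ L.toFinset, ((a i).descFactorial (b i) : ℝ))
          * mono p (fun i => if i ∈ L then a i - b i else a i) x := by
  intro L
  induction L with
  | nil =>
    intro _ c a
    simp only [List.foldr_nil, List.toFinset_nil, Finset.prod_empty, mul_one,
      List.not_mem_nil, if_false]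
  | cons i L ih =>
    intro hnd c a
    have hiL : i ∉ L := (List.nodup_cons.mp hnd).1
    have hLnd : L.Nodup := (List.nodup_cons.mp hnd).2
    rw [List.foldr_cons, ih hLnd c a, iter_dirDeriv_mono]
    funext x
    simp only [if_neg hiL]
    have hup : Function.update (fun j => if j ∈ L then a j - b j else a j) i (a i - b i)
        = fun j => if j ∈ (i :: L) then a j - b j else a j := by
      funext j
      by_cases hji : j = i
      · subst hji; simp [Function.update_self, hiL]
      · rw [Function.update_of_ne hji]
        simp only [List.mem_cons]
        by_cases hjL : j ∈ L
        · simp [hjL]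
        · simp [hjL, hji]
    rw [hup]
    have hprod : (∏ j ∈ (i :: L).toFinset, ((a j).descFactorial (b j) : ℝ))
        = ((a i).descFactorial (b i) : ℝ) * ∏ j ∈ L.toFinset, ((a j).descFactorial (b j) : ℝ) := by
      rw [List.toFinset_cons, Finset.prod_insert (by simpa using hiL)]
    rw [hprod]
    ring

lemma multiDeriv_const_mul_mono {N : ℕ} (p : Euc N) (b : Fin N → ℕ) (c : ℝ) (a : Fin N → ℕ) :
    multiDeriv b (fun x => c * mono p a x)
      = fun x => (c * ∏ i, ((a i).descFactorial (b i) : ℝ)) * mono p (fun i => a i - b i) x := by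
  rw [multiDeriv, foldr_mono p b (List.finRange N) (List.nodup_finRange N) c a]
  funext x
  have h1 : (List.finRange N).toFinset = Finset.univ := by
    ext j; simp [List.mem_finRange]
  have h2 : (fun i => if i ∈ List.finRange N then a i - b i else a i) = fun i => a i - b i := by
    funext j; simp [List.mem_finRange]
  rw [h1, h2]

lemma mono_self {N : ℕ} (p : Euc N) (a : Fin N → ℕ) :
    mono p a p = if a = 0 then 1 else 0 := by
  by_cases h : a = 0
  · subst h; simp [mono]
  · rw [if_neg h]
    obtain ⟨i, hi⟩ : ∃ i, a i ≠ 0 := by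
      by_contra hc; push_neg at hc; exact h (funext hc)
    apply Finset.prod_eq_zero (Finset.mem_univ i)
    simp [zero_pow hi]

lemma multiDeriv_mono_self {N : ℕ} (p : Euc N) (a b : Fin N → ℕ) :
    multiDeriv b (fun x => (1:ℝ) * mono p a x) p
      = if b = a then ∏ i, ((a i).factorial : ℝ) else 0 := by
  rw [multiDeriv_const_mul_mono]
  by_cases h : b = a
  · subst h
    rw [if_pos rfl]
    have h0 : (fun i => b i - b i) = (0 : Fin N → ℕ) := by funext i; simp
    simp only [h0, mono_self, if_pos rfl, mul_one, one_mul, Nat.descFactorial_self, if_true]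
  · rw [if_neg h]
    obtain ⟨i, hi⟩ : ∃ i, b i ≠ a i := by
      by_contra hc; push_neg at hc; exact h (funext hc)
    rcases Nat.lt_or_ge (a i) (b i) with hlt | hge
    · have : ((a i).descFactorial (b i) : ℝ) = 0 := by
        rw [Nat.descFactorial_eq_zero_iff_lt.mpr hlt]; simp
      have hp : (∏ j : Fin N, ((a j).descFactorial (b j) : ℝ)) = 0 :=
        Finset.prod_eq_zero (Finset.mem_univ i) this
      simp only [hp, one_mul, zero_mul]
    · have hne : (fun i => a i - b i) ≠ (0 : Fin N → ℕ) := by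
        intro hc
        have := congrFun hc i
        simp only [Pi.zero_apply] at this
        omega
      simp only [mono_self, if_neg hne, mul_zero]

lemma dirDeriv_congr {N : ℕ} {f g : Euc N → ℝ} {x : Euc N} (i : Fin N)
    (h : f =ᶠ[𝓝 x] g) : dirDeriv i f =ᶠ[𝓝 x] dirDeriv i g := by
  filter_upwards [h.fderiv (𝕜 := ℝ)] with y hy
  simp only [dirDeriv, hy]

lemma iter_dirDeriv_congr {N : ℕ} {f g : Euc N → ℝ} {x : Euc N} (i : Fin N) (n : ℕ)
    (h : f =ᶠ[𝓝 x] g) :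
    (fun h => dirDeriv i h)^[n] f =ᶠ[𝓝 x] (fun h => dirDeriv i h)^[n] g := by
  induction n with
  | zero => simpa using h
  | succ n ih =>
    rw [Function.iterate_succ_apply', Function.iterate_succ_apply']
    exact dirDeriv_congr i ih

lemma multiDeriv_congr {N : ℕ} {f g : Euc N → ℝ} {x : Euc N} (b : Fin N → ℕ)
    (h : f =ᶠ[𝓝 x] g) : multiDeriv b f =ᶠ[𝓝 x] multiDeriv b g := by
  rw [multiDeriv, multiDeriv]
  induction (List.finRange N) with
  | nil => simpa using h
  | cons i L ih =>
    rw [List.foldr_cons, List.foldr_cons]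
    exact iter_dirDeriv_congr i (b i) ih

lemma multiDeriv_zero' {N : ℕ} (b : Fin N → ℕ) (q : Euc N) :
    multiDeriv b (fun _ : Euc N => (0:ℝ)) = fun _ => 0 := by
  have h : (fun _ : Euc N => (0:ℝ)) = fun x => (0:ℝ) * mono q 0 x := by
    funext x; ring
  rw [h, multiDeriv_const_mul_mono]
  funext x
  ring

lemma mono_scale {N : ℕ} (q : Euc N) (a : Fin N → ℕ) {ε : ℝ} (hε : ε ≠ 0) (x : Euc N) :
    ε ^ (∑ i, a i) * mono q a (q + ε⁻¹ • (x - q)) = mono q a x := by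
  have hcoord : ∀ i, (q + ε⁻¹ • (x - q)) i - q i = ε⁻¹ * (x i - q i) := by
    intro i
    simp [PiLp.add_apply, PiLp.smul_apply, PiLp.sub_apply, smul_eq_mul]
  rw [mono]
  conv_lhs => rw [Finset.prod_congr rfl (fun i _ => by rw [hcoord i, mul_pow])]
  rw [Finset.prod_mul_distrib, Finset.prod_pow_eq_pow_sum]
  rw [mono, ← mul_assoc, ← mul_pow, mul_inv_cancel₀ hε, one_pow, one_mul]

lemma norm_gradient_eq {N : ℕ} (f : Euc N → ℝ) (x : Euc N) :
    ‖gradient f x‖ = ‖fderiv ℝ f x‖ := by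
  rw [gradient]
  exact LinearIsometryEquiv.norm_map _ _

lemma gradient_eq_zero_of_fderiv {N : ℕ} {f : Euc N → ℝ} {x : Euc N}
    (h : fderiv ℝ f x = 0) : gradient f x = 0 := by
  rw [gradient, h]; simp

lemma exists_testfun {N : ℕ} (q : Euc N) (a : Fin N → ℕ) {r : ℝ} (hr : 0 < r)
    (ha : 1 ≤ ∑ i, a i) :
    ∃ M : ℝ, 0 ≤ M ∧ ∀ ε : ℝ, 0 < ε → ε ≤ 1 →
    ∃ ξ : Euc N → ℝ,
      ContDiff ℝ (⊤:ℕ∞) ξ ∧ HasCompactSupport ξ ∧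
      tsupport ξ ⊆ closedBall q (ε * r) ∧
      (ξ =ᶠ[𝓝 q] mono q a) ∧
      (∀ x, x ∉ closedBall q (ε * r) → gradient ξ x = 0) ∧
      (∀ x, ‖gradient ξ x‖ ≤ M) := by
  set χ : ContDiffBump q := ⟨r/2, r, by positivity, by linarith⟩ with hχdef
  set ψ : Euc N → ℝ := fun x => mono q a x * χ x with hψdef
  have hψc : ContDiff ℝ (⊤:ℕ∞) ψ := (contDiff_mono q a).mul χ.contDiff
  have hψ0 : ∀ x, x ∉ ball q r → ψ x = 0 := by
    intro x hx
    have : χ x = 0 := by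
      rw [← Function.notMem_support, χ.support_eq]
      simpa [hχdef] using hx
    simp [hψdef, this]
  have hψs : HasCompactSupport ψ :=
    HasCompactSupport.intro (isCompact_closedBall q r)
      (fun x hx => hψ0 x (fun h => hx (ball_subset_closedBall h)))
  obtain ⟨M, hM⟩ := (hψs.fderiv (𝕜 := ℝ)).exists_bound_of_continuous
    (hψc.continuous_fderiv (by simp))
  have hM0 : 0 ≤ M := le_trans (norm_nonneg _) (hM q)
  refine ⟨M, hM0, ?_⟩
  intro ε hε hε1
  have hεne : ε ≠ 0 := ne_of_gt hε
  set s : ℕ := ∑ i, a i with hs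
  set A : Euc N → Euc N := fun x => q + ε⁻¹ • (x - q) with hA
  set ξ : Euc N → ℝ := fun x => ε ^ s * ψ (A x) with hξ
  have hAc : ContDiff ℝ (⊤:ℕ∞) A := by
    rw [hA]; fun_prop
  have hξc : ContDiff ℝ (⊤:ℕ∞) ξ := contDiff_const.mul (hψc.comp hAc)
  have hAnorm : ∀ x : Euc N, ‖A x - q‖ = ε⁻¹ * ‖x - q‖ := by
    intro x
    have h1 : A x - q = ε⁻¹ • (x - q) := by
      show q + ε⁻¹ • (x - q) - q = ε⁻¹ • (x - q)
      abel
    rw [h1, norm_smul, Real.norm_eq_abs, abs_of_pos (inv_pos.mpr hε)]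
  have hAmem : ∀ x, x ∉ closedBall q (ε * r) → A x ∉ ball q r := by
    intro x hx hmem
    apply hx
    rw [mem_closedBall, dist_eq_norm]
    rw [mem_ball, dist_eq_norm, hAnorm] at hmem
    have h2 : ε * (ε⁻¹ * ‖x - q‖) < ε * r := by
      exact mul_lt_mul_of_pos_left hmem hε
    rw [← mul_assoc, mul_inv_cancel₀ hεne, one_mul] at h2
    exact le_of_lt h2
  have hξ0 : ∀ x, x ∉ closedBall q (ε * r) → ξ x = 0 := by
    intro x hx
    rw [hξ]
    simp only [hψ0 (A x) (hAmem x hx), mul_zero]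
  have hsupp : tsupport ξ ⊆ closedBall q (ε * r) := by
    apply closure_minimal _ isClosed_closedBall
    intro x hx
    by_contra hc
    exact hx (hξ0 x hc)
  have hξcs : HasCompactSupport ξ :=
    HasCompactSupport.of_support_subset_isCompact (isCompact_closedBall q (ε * r))
      (fun x hx => by by_contra hc; exact hx (hξ0 x hc))
  -- eventual equality with mono near q
  have heq : ξ =ᶠ[𝓝 q] mono q a := by
    have hmem : ball q (ε * (r/2)) ∈ 𝓝 q := ball_mem_nhds q (by positivity)
    filter_upwards [hmem] with x hx
    have hAx : A x ∈ closedBall q (r/2) := by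
      rw [mem_closedBall, dist_eq_norm, hAnorm]
      rw [mem_ball, dist_eq_norm] at hx
      have h2 := mul_lt_mul_of_pos_left hx (inv_pos.mpr hε)
      rw [← mul_assoc, inv_mul_cancel₀ hεne, one_mul] at h2
      exact le_of_lt h2
    have hχ1 : χ (A x) = 1 := χ.one_of_mem_closedBall hAx
    rw [hξ, hψdef]
    simp only [hχ1, mul_one]
    exact mono_scale q a hεne x
  -- gradient vanishes outside
  have hgrad0 : ∀ x, x ∉ closedBall q (ε * r) → gradient ξ x = 0 := by
    intro x hx
    apply gradient_eq_zero_of_fderiv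
    have hev : ξ =ᶠ[𝓝 x] (fun _ => (0:ℝ)) := by
      have hop : IsOpen (closedBall q (ε * r))ᶜ := isClosed_closedBall.isOpen_compl
      filter_upwards [hop.mem_nhds hx] with y hy
      exact hξ0 y hy
    rw [hev.fderiv_eq]
    exact fderiv_const_apply 0
  -- gradient bound
  have hgradb : ∀ x, ‖gradient ξ x‖ ≤ M := by
    intro x
    rw [norm_gradient_eq]
    have hAd : HasFDerivAt A (ε⁻¹ • ContinuousLinearMap.id ℝ (Euc N)) x := by
      have : HasFDerivAt (fun y : Euc N => ε⁻¹ • (y - q))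
          (ε⁻¹ • ContinuousLinearMap.id ℝ (Euc N)) x :=
        ((hasFDerivAt_id x).sub_const q).const_smul ε⁻¹
      exact this.const_add q
    have hψd : HasFDerivAt ψ (fderiv ℝ ψ (A x)) (A x) :=
      ((hψc.differentiable (by simp)) (A x)).hasFDerivAt
    have hcomp : HasFDerivAt (fun y => ψ (A y))
        ((fderiv ℝ ψ (A x)).comp (ε⁻¹ • ContinuousLinearMap.id ℝ (Euc N))) x :=
      hψd.comp x hAd
    have hξd : HasFDerivAt ξ
        ((ε ^ s) • ((fderiv ℝ ψ (A x)).comp (ε⁻¹ • ContinuousLinearMap.id ℝ (Euc N)))) x :=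
      hcomp.const_mul (ε ^ s)
    rw [hξd.fderiv]
    calc ‖(ε ^ s) • ((fderiv ℝ ψ (A x)).comp (ε⁻¹ • ContinuousLinearMap.id ℝ (Euc N)))‖
        ≤ ‖ε ^ s‖ * ‖(fderiv ℝ ψ (A x)).comp (ε⁻¹ • ContinuousLinearMap.id ℝ (Euc N))‖ :=
          ContinuousLinearMap.opNorm_smul_le _ _
      _ = ε ^ s * ‖(fderiv ℝ ψ (A x)).comp (ε⁻¹ • ContinuousLinearMap.id ℝ (Euc N))‖ := by
          rw [Real.norm_eq_abs, abs_of_pos (pow_pos hε s)]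
      _ ≤ ε ^ s * (‖fderiv ℝ ψ (A x)‖ * ‖ε⁻¹ • ContinuousLinearMap.id ℝ (Euc N)‖) :=
          mul_le_mul_of_nonneg_left (ContinuousLinearMap.opNorm_comp_le _ _)
            (le_of_lt (pow_pos hε s))
      _ ≤ ε ^ s * (M * ε⁻¹) := by
          apply mul_le_mul_of_nonneg_left _ (le_of_lt (pow_pos hε s))
          apply mul_le_mul (hM (A x)) _ (norm_nonneg _) hM0
          calc ‖ε⁻¹ • ContinuousLinearMap.id ℝ (Euc N)‖
              ≤ ‖ε⁻¹‖ * ‖ContinuousLinearMap.id ℝ (Euc N)‖ := ContinuousLinearMap.opNorm_smul_le _ _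
            _ ≤ ‖ε⁻¹‖ * 1 := mul_le_mul_of_nonneg_left ContinuousLinearMap.norm_id_le
                (norm_nonneg _)
            _ = ε⁻¹ := by rw [mul_one, Real.norm_eq_abs, abs_of_pos (inv_pos.mpr hε)]
      _ ≤ 1 * M := by
          rw [mul_comm M ε⁻¹, ← mul_assoc]
          apply mul_le_mul_of_nonneg_right _ hM0
          have h1 : ε ^ s ≤ ε ^ 1 := pow_le_pow_of_le_one (le_of_lt hε) hε1 ha
          rw [pow_one] at h1
          calc ε ^ s * ε⁻¹ ≤ ε * ε⁻¹ :=
                mul_le_mul_of_nonneg_right h1 (le_of_lt (inv_pos.mpr hε))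
            _ = 1 := mul_inv_cancel₀ hεne
      _ = M := one_mul M
  exact ⟨ξ, hξc, hξcs, hsupp, heq, hgrad0, hgradb⟩

/-- Lemma 2.10: in the Schwartz representation of the distribution
`ξ ↦ ∫ ∇u·∇ξ/√(1-|∇u|²)`, all coefficients of derivatives of Dirac masses of order `≥ 1`
vanish. -/
theorem statement10 (N m0 : ℕ) (hN : 2 ≤ N) (R : ℝ) (hR : 0 < R)
    (p : Fin m0 → Euc N) (hp : Function.Injective p)
    (hpin : ∀ j, p j ∈ ball (0 : Euc N) R)
    (u : Euc N → ℝ) (hlip : ∃ K : ℝ≥0, LipschitzOnWith K u (ball 0 R))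
    (hgrad : ∀ᵐ x ∂volume.restrict (ball (0 : Euc N) R), ‖gradient u x‖ < 1)
    (hint : IntegrableOn (fun x => ‖gradient u x‖ / Real.sqrt (1 - ‖gradient u x‖ ^ 2))
      (ball 0 R) volume)
    (A : Fin m0 → Finset (Fin N → ℕ)) (k : Fin m0 → (Fin N → ℕ) → ℝ)
    (hvanish : ∀ ξ : Euc N → ℝ, ContDiff ℝ (⊤ : ℕ∞) ξ → HasCompactSupport ξ →
      tsupport ξ ⊆ ball 0 R → (∀ j, p j ∉ tsupport ξ) →
      pairingOn u ξ (ball 0 R) = 0)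
    (hrep : ∀ ξ : Euc N → ℝ, ContDiff ℝ (⊤ : ℕ∞) ξ → HasCompactSupport ξ →
      tsupport ξ ⊆ ball 0 R →
      pairingOn u ξ (ball 0 R) = ∑ j, ∑ a ∈ A j, k j a * multiDeriv a ξ (p j)) :
    ∀ j, ∀ a ∈ A j, 1 ≤ ∑ i, a i → k j a = 0 := by
  intro j a ha h1
  set q := p j with hq
  set g : Euc N → ℝ :=
    fun x => ‖gradient u x‖ / Real.sqrt (1 - ‖gradient u x‖ ^ 2) with hg
  -- Step A: a radius r around q avoiding other points and inside the ball
  obtain ⟨r, hr0, hrball, hravoid⟩ :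
      ∃ r : ℝ, 0 < r ∧ closedBall q r ⊆ ball (0 : Euc N) R ∧
        ∀ j', j' ≠ j → p j' ∉ closedBall q r := by
    set S : Set (Euc N) := p '' {j' | j' ≠ j} with hS
    have hSfin : S.Finite := (Set.toFinite _).image p
    have hO : IsOpen (ball (0 : Euc N) R \ S) := isOpen_ball.sdiff hSfin.isClosed
    have hqO : q ∈ ball (0 : Euc N) R \ S := by
      refine ⟨hpin j, ?_⟩
      rintro ⟨j', hj', hpe⟩
      exact hj' (hp hpe)
    obtain ⟨δ, hδ, hb⟩ := Metric.isOpen_iff.mp hO q hqO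
    refine ⟨δ/2, by positivity, ?_, ?_⟩
    · intro x hx
      exact (hb (closedBall_subset_ball (by linarith) hx)).1
    · intro j' hj' hmem
      exact (hb (closedBall_subset_ball (by linarith) hmem)).2 ⟨j', hj', rfl⟩
  obtain ⟨M, hM0, hfam⟩ := exists_testfun q a hr0 h1
  set C : ℝ := k j a * ∏ i, ((a i).factorial : ℝ) with hC
  set t : ℕ → Set (Euc N) :=
    fun n => closedBall q ((1/(n+1 : ℝ)) * r) ∩ ball (0 : Euc N) R with ht
  -- Key estimate for each n
  have key : ∀ n : ℕ, |C| ≤ M * ∫ x in t n, g x := by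
    intro n
    set ε : ℝ := 1/(n+1 : ℝ) with hε
    have hε0 : 0 < ε := by positivity
    have hε1 : ε ≤ 1 := by
      rw [hε]
      rw [div_le_one (by positivity)]
      linarith [Nat.cast_nonneg (α := ℝ) n]
    obtain ⟨ξ, hξc, hξcs, hξsupp, hξeq, hξgrad0, hξgradb⟩ := hfam ε hε0 hε1
    have hcb : closedBall q (ε * r) ⊆ closedBall q r :=
      closedBall_subset_closedBall (by nlinarith)
    have hrepξ := hrep ξ hξc hξcs (hξsupp.trans (hcb.trans hrball))
    -- evaluate the representation
    have hzero_out : ∀ x, x ∉ closedBall q (ε * r) → ξ x = 0 := by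
      intro x hx
      exact image_eq_zero_of_notMem_tsupport (fun hmem => hx (hξsupp hmem))
    have hsum : (∑ j', ∑ b ∈ A j', k j' b * multiDeriv b ξ (p j')) = C := by
      rw [Finset.sum_eq_single_of_mem j (Finset.mem_univ j)]
      · rw [Finset.sum_eq_single_of_mem a ha]
        · have heq' : ξ =ᶠ[𝓝 q] (fun x => (1:ℝ) * mono q a x) := by
            filter_upwards [hξeq] with x hx
            rw [hx, one_mul]
          have := (multiDeriv_congr a heq').eq_of_nhds
          rw [hC, this, multiDeriv_mono_self, if_pos rfl]
        · intro b hb hba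
          have heq' : ξ =ᶠ[𝓝 q] (fun x => (1:ℝ) * mono q a x) := by
            filter_upwards [hξeq] with x hx
            rw [hx, one_mul]
          have := (multiDeriv_congr b heq').eq_of_nhds
          rw [this, multiDeriv_mono_self, if_neg hba, mul_zero]
      · intro j' _ hj'
        apply Finset.sum_eq_zero
        intro b _
        have hnot : p j' ∉ closedBall q (ε * r) := fun h => hravoid j' hj' (hcb h)
        have hev : ξ =ᶠ[𝓝 (p j')] (fun _ => (0:ℝ)) := by
          filter_upwards [isClosed_closedBall.isOpen_compl.mem_nhds hnot] with y hy
          exact hzero_out y hy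
        have := (multiDeriv_congr b hev).eq_of_nhds
        rw [this, multiDeriv_zero' b q]
        simp
    rw [hsum] at hrepξ
    -- pointwise bound
    have hbound : ∀ x : Euc N,
        |(inner ℝ (gradient u x) (gradient ξ x) : ℝ) / Real.sqrt (1 - ‖gradient u x‖ ^ 2)|
          ≤ M * Set.indicator (closedBall q (ε * r)) g x := by
      intro x
      by_cases hx : x ∈ closedBall q (ε * r)
      · rw [Set.indicator_of_mem hx]
        have hsq : 0 ≤ Real.sqrt (1 - ‖gradient u x‖ ^ 2) := Real.sqrt_nonneg _
        rcases eq_or_lt_of_le hsq with hsq0 | hsqpos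
        · rw [← hsq0, div_zero, abs_zero, hg]
          simp only [← hsq0, div_zero, mul_zero, le_refl]
        · rw [abs_div, abs_of_pos hsqpos]
          have h2 : |(inner ℝ (gradient u x) (gradient ξ x) : ℝ)|
              ≤ ‖gradient u x‖ * M := by
            calc |(inner ℝ (gradient u x) (gradient ξ x) : ℝ)|
                ≤ ‖gradient u x‖ * ‖gradient ξ x‖ := abs_real_inner_le_norm _ _
              _ ≤ ‖gradient u x‖ * M :=
                  mul_le_mul_of_nonneg_left (hξgradb x) (norm_nonneg _)
          calc |(inner ℝ (gradient u x) (gradient ξ x) : ℝ)|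
                / Real.sqrt (1 - ‖gradient u x‖ ^ 2)
              ≤ (‖gradient u x‖ * M) / Real.sqrt (1 - ‖gradient u x‖ ^ 2) := by
                gcongr
            _ = M * g x := by rw [hg]; ring
      · rw [Set.indicator_of_notMem hx, hξgrad0 x hx]
        simp
    -- integral bound
    have hbint : Integrable
        (fun x => M * Set.indicator (closedBall q (ε * r)) g x)
        (volume.restrict (ball (0 : Euc N) R)) :=
      (hint.indicator measurableSet_closedBall).const_mul M
    have hle : ‖pairingOn u ξ (ball (0:Euc N) R)‖
        ≤ ∫ x in ball (0 : Euc N) R, M * Set.indicator (closedBall q (ε * r)) g x := by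
      apply norm_integral_le_of_norm_le hbint
      filter_upwards with x
      rw [Real.norm_eq_abs]
      exact hbound x
    have heval : (∫ x in ball (0 : Euc N) R,
        M * Set.indicator (closedBall q (ε * r)) g x) = M * ∫ x in t n, g x := by
      rw [integral_const_mul]
      congr 1
      rw [integral_indicator measurableSet_closedBall]
      rw [ht]
      rw [Measure.restrict_restrict measurableSet_closedBall]
    rw [hrepξ] at hle
    rw [heval] at hle
    rw [Real.norm_eq_abs] at hle
    exact hle
  -- pass to the limit
  have hanti : Antitone t := by
    intro n m hnm
    apply Set.inter_subset_inter_left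
    apply closedBall_subset_closedBall
    apply mul_le_mul_of_nonneg_right _ (le_of_lt hr0)
    apply div_le_div_of_nonneg_left (by norm_num) (by positivity)
    · exact_mod_cast by omega
  have hmeas : ∀ n, MeasurableSet (t n) :=
    fun n => measurableSet_closedBall.inter measurableSet_ball
  have hinteg : ∃ n, IntegrableOn g (t n) volume :=
    ⟨0, hint.mono_set Set.inter_subset_right⟩
  have htend := tendsto_setIntegral_of_antitone hmeas hanti hinteg
  have hnull : volume (⋂ n, t n) = 0 := by
    have hnontriv : Nontrivial (Euc N) := by
      refine ⟨0, EuclideanSpace.single (⟨0, by omega⟩ : Fin N) 1, ?_⟩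
      intro hc
      have := congrFun (congrArg (fun f : Euc N => (f.ofLp : Fin N → ℝ)) hc) (⟨0, by omega⟩ : Fin N)
      simp [EuclideanSpace.single_apply] at this
    apply measure_mono_null (t := {q}) _ (measure_singleton q)
    intro x hx
    simp only [Set.mem_iInter] at hx
    have : ∀ n : ℕ, dist x q ≤ (1/(n+1 : ℝ)) * r := fun n => (hx n).1
    have hdist : dist x q ≤ 0 := by
      by_contra hc
      push_neg at hc
      obtain ⟨n, hn⟩ := exists_nat_gt (r / dist x q)
      have h2 := this n
      have h3 : (1/(n+1 : ℝ)) * r < dist x q := by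
        rw [div_mul_eq_mul_div, one_mul, div_lt_iff₀ (by positivity)]
        calc r = (r / dist x q) * dist x q := by field_simp
          _ < n * dist x q := by
              apply mul_lt_mul_of_pos_right hn hc
          _ ≤ dist x q * (n+1) := by nlinarith [hc]
      linarith
    simp [Set.mem_singleton_iff, dist_le_zero.mp hdist]
  have hzero : (∫ x in ⋂ n, t n, g x) = 0 := by
    rw [Measure.restrict_eq_zero.mpr hnull]
    simp
  rw [hzero] at htend
  have htend2 : Tendsto (fun n => M * ∫ x in t n, g x) atTop (𝓝 0) := by
    have := htend.const_mul M
    simpa using this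
  have habs : |C| ≤ 0 := ge_of_tendsto' htend2 key
  have hC0 : C = 0 := abs_eq_zero.mp (le_antisymm habs (abs_nonneg _))
  rw [hC] at hC0
  rcases mul_eq_zero.mp hC0 with h | h
  · exact h
  · exfalso
    have : (0:ℝ) < ∏ i, ((a i).factorial : ℝ) := by
      apply Finset.prod_pos
      intro i _
      exact_mod_cast (a i).factorial_pos
    rw [h] at this
    exact lt_irrefl 0 this
end
end

section
/- Let α > 0 and define, for r = |x| > 0, Φ_{2,α}(x) = −(α/(2π)) ( ln( r + √((α/(2π))² + r²) ) − ln(α/(2π)) ). Then Φ_{2,α} is a weak solution of ℳ₀u = α δ_0 in ℝ² with u(0) = 0: Φ_{2,α} is C² on ℝ² ∖ {0} with |∇Φ_{2,α}| < 1 there, ℳ₀Φ_{2,α} = 0 classically on ℝ² ∖ {0}, and ∫_{ℝ²} ∇Φ_{2,α}·∇φ / √(1 − |∇Φ_{2,α}|²) dx = α φ(0) for every φ ∈ C¹_c(ℝ²). Moreover |∇Φ_{2,α}(x)| → 1 and ∇Φ_{2,α}(x)·(x/|x|) → −1 as |x| → 0⁺. -/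
open MeasureTheory Real Filter Topology Metric
open scoped NNReal

noncomputable section

section Helpers

variable {α : ℝ}

lemma aux_sq_pos (ha : 0 < α) (r : ℝ) : 0 < (α / (2 * Real.pi)) ^ 2 + r ^ 2 := by
  have : 0 < α / (2 * Real.pi) := div_pos ha (by positivity)
  positivity

lemma aux_sqrt_pos (ha : 0 < α) (r : ℝ) :
    0 < Real.sqrt ((α / (2 * Real.pi)) ^ 2 + r ^ 2) :=
  Real.sqrt_pos.2 (aux_sq_pos ha r)

lemma aux_arg_pos (ha : 0 < α) (r : ℝ) :
    0 < r + Real.sqrt ((α / (2 * Real.pi)) ^ 2 + r ^ 2) := by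
  have h1 : |r| < Real.sqrt ((α / (2 * Real.pi)) ^ 2 + r ^ 2) := by
    have : 0 < α / (2 * Real.pi) := div_pos ha (by positivity)
    rw [← Real.sqrt_sq_eq_abs]
    exact Real.sqrt_lt_sqrt (sq_nonneg r) (by nlinarith)
  have h2 : -r ≤ |r| := neg_le_abs r
  linarith

lemma hasDerivAt_Phi2rad (ha : 0 < α) (r : ℝ) :
    HasDerivAt (Phi2rad α)
      (-(α / (2 * Real.pi) / Real.sqrt ((α / (2 * Real.pi)) ^ 2 + r ^ 2))) r := by
  set a := α / (2 * Real.pi) with hadef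
  have haa : 0 < a := div_pos ha (by positivity)
  have hs : 0 < Real.sqrt (a ^ 2 + r ^ 2) := aux_sqrt_pos ha r
  have h0 : HasDerivAt (fun t : ℝ => a ^ 2 + t ^ 2) (2 * r) r := by
    simpa using (hasDerivAt_pow 2 r).const_add (a ^ 2)
  have h1 : HasDerivAt (fun t : ℝ => Real.sqrt (a ^ 2 + t ^ 2))
      (1 / (2 * Real.sqrt (a ^ 2 + r ^ 2)) * (2 * r)) r :=
    (Real.hasDerivAt_sqrt (aux_sq_pos ha r).ne').comp r h0
  have h2 : HasDerivAt (fun t : ℝ => t + Real.sqrt (a ^ 2 + t ^ 2))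
      (1 + 1 / (2 * Real.sqrt (a ^ 2 + r ^ 2)) * (2 * r)) r :=
    (hasDerivAt_id r).add h1
  have h3 : HasDerivAt (fun t : ℝ => Real.log (t + Real.sqrt (a ^ 2 + t ^ 2)))
      ((1 + 1 / (2 * Real.sqrt (a ^ 2 + r ^ 2)) * (2 * r)) /
        (r + Real.sqrt (a ^ 2 + r ^ 2))) r :=
    h2.log (aux_arg_pos ha r).ne'
  have h4 : HasDerivAt (Phi2rad α)
      (-a * ((1 + 1 / (2 * Real.sqrt (a ^ 2 + r ^ 2)) * (2 * r)) /
        (r + Real.sqrt (a ^ 2 + r ^ 2)))) r :=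
    (h3.sub_const (Real.log a)).const_mul (-a)
  convert h4 using 1
  have hrs : r + Real.sqrt (a ^ 2 + r ^ 2) ≠ 0 := (aux_arg_pos ha r).ne'
  have hsq : Real.sqrt (a ^ 2 + r ^ 2) * Real.sqrt (a ^ 2 + r ^ 2) = a ^ 2 + r ^ 2 :=
    Real.mul_self_sqrt (aux_sq_pos ha r).le
  field_simp
  nlinarith [hsq]

lemma contDiff_Phi2rad (ha : 0 < α) : ContDiff ℝ 2 (Phi2rad α) := by
  rw [contDiff_iff_contDiffAt]
  intro r
  have h1 : ContDiffAt ℝ 2 (fun t : ℝ => t + Real.sqrt ((α / (2 * Real.pi)) ^ 2 + t ^ 2)) r := by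
    refine contDiffAt_id.add ?_
    exact (Real.contDiffAt_sqrt (aux_sq_pos ha r).ne').comp r
      ((contDiffAt_const (c := (α / (2 * Real.pi)) ^ 2)).add (contDiffAt_id.pow 2))
  have h2 : ContDiffAt ℝ 2
      (fun t : ℝ => Real.log (t + Real.sqrt ((α / (2 * Real.pi)) ^ 2 + t ^ 2))) r :=
    (Real.contDiffAt_log.2 (aux_arg_pos ha r).ne').comp (g := Real.log) r h1
  exact contDiffAt_const.mul (h2.sub contDiffAt_const)

end Helpers
section Grad

variable {α : ℝ}

lemma hasFDerivAt_norm_Euc {x : Euc 2} (hx : x ≠ 0) :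
    HasFDerivAt (fun y : Euc 2 => ‖y‖) (‖x‖⁻¹ • (innerSL ℝ x : Euc 2 →L[ℝ] ℝ)) x := by
  have hq : HasFDerivAt (fun y : Euc 2 => (inner ℝ y y : ℝ))
      ((fderivInnerCLM ℝ (x, x)).comp ((ContinuousLinearMap.id ℝ (Euc 2)).prod
        (ContinuousLinearMap.id ℝ (Euc 2)))) x :=
    (hasFDerivAt_id x).inner ℝ (hasFDerivAt_id x)
  have hqx : (inner ℝ x x : ℝ) ≠ 0 := by
    rw [real_inner_self_eq_norm_sq]
    exact pow_ne_zero 2 (norm_ne_zero_iff.2 hx)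
  have hsq := (Real.hasDerivAt_sqrt hqx).comp_hasFDerivAt (f := fun y : Euc 2 => (inner ℝ y y : ℝ)) x hq
  have heq : (fun y : Euc 2 => ‖y‖) = (fun t => Real.sqrt t) ∘ (fun y : Euc 2 => (inner ℝ y y : ℝ)) := by
    funext y
    show ‖y‖ = Real.sqrt (inner ℝ y y : ℝ)
    rw [real_inner_self_eq_norm_sq y, Real.sqrt_sq (norm_nonneg y)]
  rw [heq]
  refine hsq.congr_fderiv ?_
  ext v
  have : (inner ℝ x x : ℝ) = ‖x‖ ^ 2 := real_inner_self_eq_norm_sq x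
  simp only [ContinuousLinearMap.coe_smul', Pi.smul_apply, innerSL_apply_apply,
    ContinuousLinearMap.coe_comp', Function.comp_apply, ContinuousLinearMap.prod_apply,
    ContinuousLinearMap.coe_id', id_eq, fderivInnerCLM_apply, smul_eq_mul]
  rw [real_inner_comm v x]
  rw [this]
  rw [Real.sqrt_sq (norm_nonneg x)]
  have hxn : ‖x‖ ≠ 0 := norm_ne_zero_iff.2 hx
  field_simp
  ring

lemma hasGradientAt_Phi2 (ha : 0 < α) {x : Euc 2} (hx : x ≠ 0) :
    HasGradientAt (Phi2 α)
      ((-(α / (2 * Real.pi) / Real.sqrt ((α / (2 * Real.pi)) ^ 2 + ‖x‖ ^ 2)) * ‖x‖⁻¹) • x) x := by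
  rw [hasGradientAt_iff_hasFDerivAt]
  have hcomp := (hasDerivAt_Phi2rad ha ‖x‖).comp_hasFDerivAt x (hasFDerivAt_norm_Euc hx)
  have : Phi2 α = Phi2rad α ∘ (fun y : Euc 2 => ‖y‖) := rfl
  rw [this]
  refine hcomp.congr_fderiv ?_
  ext v
  simp only [InnerProductSpace.toDual_apply_apply, real_inner_smul_left, ContinuousLinearMap.coe_smul',
    Pi.smul_apply, innerSL_apply_apply, smul_eq_mul]
  ring

lemma gradient_Phi2_eq (ha : 0 < α) {x : Euc 2} (hx : x ≠ 0) :
    gradient (Phi2 α) x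
      = (-(α / (2 * Real.pi) / Real.sqrt ((α / (2 * Real.pi)) ^ 2 + ‖x‖ ^ 2)) * ‖x‖⁻¹) • x :=
  (hasGradientAt_Phi2 ha hx).gradient

lemma norm_gradient_Phi2 (ha : 0 < α) {x : Euc 2} (hx : x ≠ 0) :
    ‖gradient (Phi2 α) x‖
      = α / (2 * Real.pi) / Real.sqrt ((α / (2 * Real.pi)) ^ 2 + ‖x‖ ^ 2) := by
  rw [gradient_Phi2_eq ha hx, norm_smul]
  have h1 : 0 < α / (2 * Real.pi) / Real.sqrt ((α / (2 * Real.pi)) ^ 2 + ‖x‖ ^ 2) :=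
    div_pos (div_pos ha (by positivity)) (aux_sqrt_pos ha _)
  have hxn : (0:ℝ) < ‖x‖ := norm_pos_iff.2 hx
  rw [Real.norm_eq_abs, abs_mul, abs_neg, abs_of_pos h1, abs_inv, abs_norm]
  field_simp

lemma frac_lt_one (ha : 0 < α) {r : ℝ} (hr : r ≠ 0) :
    α / (2 * Real.pi) / Real.sqrt ((α / (2 * Real.pi)) ^ 2 + r ^ 2) < 1 := by
  rw [div_lt_one (aux_sqrt_pos ha r)]
  have haa : 0 < α / (2 * Real.pi) := div_pos ha (by positivity)
  calc α / (2 * Real.pi) = Real.sqrt ((α / (2 * Real.pi)) ^ 2) := by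
        rw [Real.sqrt_sq haa.le]
    _ < Real.sqrt ((α / (2 * Real.pi)) ^ 2 + r ^ 2) :=
        Real.sqrt_lt_sqrt (by positivity) (by nlinarith [pow_pos (abs_pos.2 hr) 2, sq_abs r])

end Grad
section MCzero

variable {α : ℝ}

lemma vecfield_eq (ha : 0 < α) {y : Euc 2} (hy : y ≠ 0) :
    (Real.sqrt (1 - ‖gradient (Phi2 α) y‖ ^ 2))⁻¹ • gradient (Phi2 α) y
      = (-(α / (2 * Real.pi)) * (‖y‖ ^ 2)⁻¹) • y := by
  set a := α / (2 * Real.pi) with hadef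
  have haa : 0 < a := div_pos ha (by positivity)
  set r := ‖y‖ with hrdef
  have hr : 0 < r := norm_pos_iff.2 hy
  set s := Real.sqrt (a ^ 2 + r ^ 2) with hsdef
  have hs : 0 < s := aux_sqrt_pos ha r
  have hs2 : s ^ 2 = a ^ 2 + r ^ 2 := Real.sq_sqrt (aux_sq_pos ha r).le
  rw [norm_gradient_Phi2 ha hy, gradient_Phi2_eq ha hy, smul_smul]
  have h1 : 1 - (a / s) ^ 2 = (r / s) ^ 2 := by
    field_simp
    linarith [hs2]
  rw [← hrdef, ← hsdef, h1, Real.sqrt_sq (by positivity)]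
  congr 1
  have hpi : (Real.pi : ℝ) ≠ 0 := Real.pi_ne_zero
  field_simp
  linear_combination α * mul_inv_cancel₀ hpi

lemma MC_Phi2_eq_zero (ha : 0 < α) {x : Euc 2} (hx : x ≠ 0) : MC (Phi2 α) x = 0 := by
  set a := α / (2 * Real.pi) with hadef
  have haa : 0 < a := div_pos ha (by positivity)
  have hx0 : (inner ℝ x x : ℝ) ≠ 0 := by
    rw [real_inner_self_eq_norm_sq x]
    exact pow_ne_zero 2 (norm_ne_zero_iff.2 hx)
  -- derivative of the vector field
  have hq : HasFDerivAt (fun y : Euc 2 => (inner ℝ y y : ℝ))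
      ((fderivInnerCLM ℝ (x, x)).comp ((ContinuousLinearMap.id ℝ (Euc 2)).prod
        (ContinuousLinearMap.id ℝ (Euc 2)))) x :=
    (hasFDerivAt_id x).inner ℝ (hasFDerivAt_id x)
  have hinv := (hasDerivAt_inv hx0).comp_hasFDerivAt
    (f := fun y : Euc 2 => (inner ℝ y y : ℝ)) x hq
  have hg := hinv.const_mul (-a)
  have hW := hg.smul (hasFDerivAt_id x)
  have hev : (fun y : Euc 2 => (Real.sqrt (1 - ‖gradient (Phi2 α) y‖ ^ 2))⁻¹ •
      gradient (Phi2 α) y)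
      =ᶠ[nhds x] (fun y : Euc 2 => (-a * ((inner ℝ y y : ℝ))⁻¹) • y) := by
    filter_upwards [isOpen_compl_singleton.mem_nhds hx] with y hy
    have hy' : y ≠ 0 := hy
    rw [vecfield_eq ha hy', real_inner_self_eq_norm_sq y]
  have hD := (hW.congr_of_eventuallyEq hev).fderiv
  show -vdiv _ x = 0
  unfold vdiv
  rw [hD]
  have hsum : (inner ℝ x x : ℝ) = x 0 * x 0 + x 1 * x 1 := by
    rw [PiLp.inner_apply]
    simp [Fin.sum_univ_two]
    ring
  simp only [ContinuousLinearMap.add_apply, ContinuousLinearMap.smul_apply,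
    ContinuousLinearMap.smulRight_apply, ContinuousLinearMap.coe_id', id_eq,
    ContinuousLinearMap.coe_comp', Function.comp_apply, ContinuousLinearMap.prod_apply,
    fderivInnerCLM_apply, inner_add_left, real_inner_smul_left, smul_eq_mul,
    Fin.sum_univ_two]
  rw [hsum] at hx0 ⊢
  have e00 : (inner ℝ (EuclideanSpace.single (0 : Fin 2) (1:ℝ)) (EuclideanSpace.single (0 : Fin 2) (1:ℝ)) : ℝ) = 1 := by
    simp [EuclideanSpace.inner_single_left, EuclideanSpace.single_apply]
  have e11 : (inner ℝ (EuclideanSpace.single (1 : Fin 2) (1:ℝ)) (EuclideanSpace.single (1 : Fin 2) (1:ℝ)) : ℝ) = 1 := by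
    simp [EuclideanSpace.inner_single_left, EuclideanSpace.single_apply]
  have ex0 : (inner ℝ x (EuclideanSpace.single (0 : Fin 2) (1:ℝ)) : ℝ) = x 0 := by
    simp [EuclideanSpace.inner_single_right]
  have ex1 : (inner ℝ x (EuclideanSpace.single (1 : Fin 2) (1:ℝ)) : ℝ) = x 1 := by
    simp [EuclideanSpace.inner_single_right]
  have e0x : (inner ℝ (EuclideanSpace.single (0 : Fin 2) (1:ℝ)) x : ℝ) = x 0 := by
    simp [EuclideanSpace.inner_single_left]
  have e1x : (inner ℝ (EuclideanSpace.single (1 : Fin 2) (1:ℝ)) x : ℝ) = x 1 := by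
    simp [EuclideanSpace.inner_single_left]
  rw [e00, e11, ex0, ex1, e0x, e1x]
  field_simp
  ring

end MCzero
section Limits

variable {α : ℝ}

lemma Phi2_zero (ha : 0 < α) : Phi2 α 0 = 0 := by
  have haa : 0 < α / (2 * Real.pi) := div_pos ha (by positivity)
  simp only [Phi2, Phi2rad, norm_zero]
  rw [show (0:ℝ) ^ 2 = 0 by ring, add_zero, zero_add, Real.sqrt_sq haa.le]
  simp

lemma contDiffOn_Phi2 (ha : 0 < α) : ContDiffOn ℝ 2 (Phi2 α) {x : Euc 2 | x ≠ 0} := by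
  intro x hx
  have : ContDiffAt ℝ 2 (Phi2 α) x :=
    (contDiff_Phi2rad ha).contDiffAt.comp x (contDiffAt_norm ℝ hx)
  exact this.contDiffWithinAt

lemma tendsto_aux (ha : 0 < α) :
    Tendsto (fun x : Euc 2 => α / (2 * Real.pi) /
      Real.sqrt ((α / (2 * Real.pi)) ^ 2 + ‖x‖ ^ 2)) (𝓝[≠] (0 : Euc 2)) (𝓝 1) := by
  have haa : 0 < α / (2 * Real.pi) := div_pos ha (by positivity)
  have hnorm : Tendsto (fun x : Euc 2 => ‖x‖) (𝓝[≠] (0 : Euc 2)) (𝓝 0) := by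
    have := (continuous_norm (E := Euc 2)).tendsto 0
    rw [norm_zero] at this
    exact this.mono_left nhdsWithin_le_nhds
  have hc : ContinuousAt (fun r : ℝ => α / (2 * Real.pi) /
      Real.sqrt ((α / (2 * Real.pi)) ^ 2 + r ^ 2)) 0 := by
    apply ContinuousAt.div continuousAt_const
    · exact (Real.continuous_sqrt.comp (by continuity)).continuousAt
    · exact (aux_sqrt_pos ha 0).ne'
  have := hc.tendsto.comp hnorm
  have hval : α / (2 * Real.pi) / Real.sqrt ((α / (2 * Real.pi)) ^ 2 + (0:ℝ) ^ 2) = 1 := by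
    rw [show ((0:ℝ)) ^ 2 = 0 by ring, add_zero, Real.sqrt_sq haa.le]
    field_simp
  rw [hval] at this
  exact this

lemma tendsto_norm_grad (ha : 0 < α) :
    Tendsto (fun x : Euc 2 => ‖gradient (Phi2 α) x‖) (𝓝[≠] (0 : Euc 2)) (𝓝 1) := by
  refine (tendsto_aux ha).congr' ?_
  filter_upwards [self_mem_nhdsWithin] with x hx
  exact (norm_gradient_Phi2 ha hx).symm

lemma tendsto_inner_grad (ha : 0 < α) :
    Tendsto (fun x : Euc 2 => (inner ℝ (gradient (Phi2 α) x) (‖x‖⁻¹ • x) : ℝ))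
      (𝓝[≠] (0 : Euc 2)) (𝓝 (-1)) := by
  have h1 : Tendsto (fun x : Euc 2 => -(α / (2 * Real.pi) /
      Real.sqrt ((α / (2 * Real.pi)) ^ 2 + ‖x‖ ^ 2))) (𝓝[≠] (0 : Euc 2)) (𝓝 (-1)) :=
    (tendsto_aux ha).neg
  refine h1.congr' ?_
  filter_upwards [self_mem_nhdsWithin] with x hx
  have hxn : (0:ℝ) < ‖x‖ := norm_pos_iff.2 hx
  rw [gradient_Phi2_eq ha hx, real_inner_smul_left, real_inner_smul_right,
    real_inner_self_eq_norm_sq x]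
  field_simp

end Limits
section Weak

/-- The identification of `ℝ × ℝ` with `Euc 2`. -/
def TT : (ℝ × ℝ) ≃ᵐ Euc 2 :=
  ((MeasurableEquiv.toLp 2 (Fin 2 → ℝ)).symm.trans MeasurableEquiv.finTwoArrow).symm

lemma TT_measurePreserving : MeasurePreserving TT :=
  ((EuclideanSpace.volume_preserving_symm_measurableEquiv_toLp (Fin 2)).trans
    (volume_preserving_finTwoArrow ℝ)).symm

lemma TT_apply (p : ℝ × ℝ) :
    TT p = p.1 • EuclideanSpace.single (0 : Fin 2) (1:ℝ)
        + p.2 • EuclideanSpace.single (1 : Fin 2) (1:ℝ) := by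
  ext i
  fin_cases i <;> simp [EuclideanSpace.single_apply] <;> rfl

/-- The unit vector in direction `θ`. -/
def cc (θ : ℝ) : Euc 2 :=
  Real.cos θ • EuclideanSpace.single (0 : Fin 2) (1:ℝ)
    + Real.sin θ • EuclideanSpace.single (1 : Fin 2) (1:ℝ)

lemma cc_cont : Continuous cc :=
  (Real.continuous_cos.smul continuous_const).add (Real.continuous_sin.smul continuous_const)

lemma cc_apply_zero (θ : ℝ) : cc θ 0 = Real.cos θ := by
  simp [cc, EuclideanSpace.single_apply]

lemma cc_apply_one (θ : ℝ) : cc θ 1 = Real.sin θ := by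
  simp [cc, EuclideanSpace.single_apply]

lemma norm_cc (θ : ℝ) : ‖cc θ‖ = 1 := by
  rw [EuclideanSpace.norm_eq]
  rw [Fin.sum_univ_two, cc_apply_zero, cc_apply_one, Real.norm_eq_abs, Real.norm_eq_abs,
    sq_abs, sq_abs, Real.cos_sq_add_sin_sq, Real.sqrt_one]

lemma TT_polar (p : ℝ × ℝ) : TT (polarCoord.symm p) = p.1 • cc p.2 := by
  have h : polarCoord.symm p = (p.1 * Real.cos p.2, p.1 * Real.sin p.2) := rfl
  rw [h, TT_apply, cc, smul_add, smul_smul, smul_smul]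

variable {α : ℝ}

lemma inner_grad (φ : Euc 2 → ℝ) (x v : Euc 2) :
    (inner ℝ (gradient φ x) v : ℝ) = fderiv ℝ φ x v :=
  InnerProductSpace.toDual_symm_apply

lemma pairing_Phi2 (ha : 0 < α) (φ : Euc 2 → ℝ) (hφ : ContDiff ℝ 1 φ)
    (hφc : HasCompactSupport φ) : pairing (Phi2 α) φ = α * φ 0 := by
  have hpi : (0:ℝ) < Real.pi := Real.pi_pos
  set a := α / (2 * Real.pi) with hadef
  have haa : 0 < a := div_pos ha (by positivity)
  -- support radius
  obtain ⟨R0, hR0⟩ := hφc.isBounded.subset_closedBall 0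
  set R := max R0 1 with hRdef
  have hRpos : (0:ℝ) < R := lt_of_lt_of_le one_pos (le_max_right _ _)
  have hRsupp : tsupport φ ⊆ Metric.closedBall 0 R :=
    hR0.trans (Metric.closedBall_subset_closedBall (le_max_left _ _))
  have hφ0 : ∀ x : Euc 2, R < ‖x‖ → φ x = 0 := by
    intro x hx
    apply image_eq_zero_of_notMem_tsupport
    intro hmem
    have := hRsupp hmem
    rw [Metric.mem_closedBall, dist_zero_right] at this
    linarith
  have hgrad_cont : Continuous (gradient φ) :=
    (InnerProductSpace.toDual ℝ (Euc 2)).symm.continuous.comp (hφ.continuous_fderiv (by norm_num))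
  have hgrad0 : ∀ x : Euc 2, R < ‖x‖ → gradient φ x = 0 := by
    intro x hx
    have hfd : fderiv ℝ φ x = 0 := by
      apply Function.notMem_support.mp
      intro hmem
      have := (support_fderiv_subset ℝ) hmem
      have := hRsupp this
      rw [Metric.mem_closedBall, dist_zero_right] at this
      linarith
    show (InnerProductSpace.toDual ℝ (Euc 2)).symm (fderiv ℝ φ x) = 0
    rw [hfd]
    simp
  set G : Euc 2 → ℝ := fun x => (-a * (‖x‖ ^ 2)⁻¹) * (inner ℝ x (gradient φ x) : ℝ) with hGdef
  -- step A
  have hA : pairing (Phi2 α) φ = ∫ x : Euc 2, G x := by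
    unfold pairing
    apply integral_congr_ae
    have h0 : ({(0 : Euc 2)}ᶜ : Set (Euc 2)) ∈ ae volume :=
      compl_mem_ae_iff.2 (measure_singleton 0)
    filter_upwards [h0] with x hx
    have hx' : x ≠ 0 := hx
    rw [div_eq_inv_mul, ← real_inner_smul_left, vecfield_eq ha hx', real_inner_smul_left]
  -- step B : transfer to ℝ × ℝ
  have hB : ∫ x : Euc 2, G x = ∫ p : ℝ × ℝ, G (TT p) :=
    (TT_measurePreserving.integral_comp TT.measurableEmbedding G).symm
  -- step C : polar coordinates
  have hC : ∫ p : ℝ × ℝ, G (TT p)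
      = ∫ p in polarCoord.target, p.1 • G (TT (polarCoord.symm p)) :=
    (integral_comp_polarCoord_symm fun p => G (TT p)).symm
  set H : ℝ × ℝ → ℝ := fun p => -a * (inner ℝ (cc p.2) (gradient φ (p.1 • cc p.2)) : ℝ)
    with hHdef
  have htarget : polarCoord.target = Set.Ioi (0:ℝ) ×ˢ Set.Ioo (-Real.pi) Real.pi := rfl
  -- step D : pointwise identification on the target
  have hD : ∀ p ∈ (Set.Ioi (0:ℝ) ×ˢ Set.Ioo (-Real.pi) Real.pi),
      p.1 • G (TT (polarCoord.symm p)) = H p := by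
    rintro ⟨r, θ⟩ hp
    have hr : (0:ℝ) < r := hp.1
    have hx : TT (polarCoord.symm (r, θ)) = r • cc θ := TT_polar (r, θ)
    have hnorm : ‖r • cc θ‖ = r := by
      rw [norm_smul, norm_cc, mul_one, Real.norm_eq_abs, abs_of_pos hr]
    rw [hx, hGdef, hHdef]
    simp only [smul_eq_mul]
    rw [hnorm, real_inner_smul_left]
    field_simp
  have hD' : ∫ p in polarCoord.target, p.1 • G (TT (polarCoord.symm p))
      = ∫ p in (Set.Ioi (0:ℝ) ×ˢ Set.Ioo (-Real.pi) Real.pi), H p := by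
    rw [htarget]
    exact setIntegral_congr_fun (measurableSet_Ioi.prod measurableSet_Ioo) hD
  -- continuity and support of H
  have hHcont : Continuous H := by
    apply Continuous.mul continuous_const
    exact Continuous.inner (cc_cont.comp continuous_snd)
      (hgrad_cont.comp (continuous_fst.smul (cc_cont.comp continuous_snd)))
  have hH0 : ∀ p : ℝ × ℝ, R < |p.1| → H p = 0 := by
    intro p hp
    have h1 : gradient φ (p.1 • cc p.2) = 0 :=
      hgrad0 _ (by rw [norm_smul, norm_cc, mul_one, Real.norm_eq_abs]; exact hp)
    simp only [hHdef, h1, inner_zero_right, mul_zero]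
  -- integrability on the target
  have hint : IntegrableOn H (Set.Ioi (0:ℝ) ×ˢ Set.Ioo (-Real.pi) Real.pi) := by
    have hK : IsCompact (Set.Icc (0:ℝ) R ×ˢ Set.Icc (-Real.pi) Real.pi) :=
      isCompact_Icc.prod isCompact_Icc
    have h1 : IntegrableOn H (Set.Icc (0:ℝ) R ×ˢ Set.Icc (-Real.pi) Real.pi) :=
      ContinuousOn.integrableOn_compact hK hHcont.continuousOn
    have h2 : IntegrableOn H ((Set.Ioi (0:ℝ) ×ˢ Set.Ioo (-Real.pi) Real.pi)
        \ (Set.Icc (0:ℝ) R ×ˢ Set.Icc (-Real.pi) Real.pi)) := by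
      have heq : Set.EqOn H (fun _ => (0:ℝ))
          ((Set.Ioi (0:ℝ) ×ˢ Set.Ioo (-Real.pi) Real.pi)
            \ (Set.Icc (0:ℝ) R ×ˢ Set.Icc (-Real.pi) Real.pi)) := by
        rintro ⟨r, θ⟩ ⟨hmem, hnot⟩
        have hr : (0:ℝ) < r := hmem.1
        have hθ : θ ∈ Set.Icc (-Real.pi) Real.pi := ⟨(hmem.2).1.le, (hmem.2).2.le⟩
        have hrR : R < r := by
          by_contra hcon
          push_neg at hcon
          exact hnot ⟨⟨hr.le, hcon⟩, hθ⟩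
        exact hH0 _ (by rwa [abs_of_pos hr])
      exact (integrableOn_congr_fun heq
        ((measurableSet_Ioi.prod measurableSet_Ioo).diff
          (measurableSet_Icc.prod measurableSet_Icc))).2 (integrableOn_zero)
    refine (h1.union h2).mono_set (fun p hp => ?_)
    by_cases hmem : p ∈ Set.Icc (0:ℝ) R ×ˢ Set.Icc (-Real.pi) Real.pi
    · exact Or.inl hmem
    · exact Or.inr ⟨hp, hmem⟩
  -- Fubini
  have hE : ∫ p in (Set.Ioi (0:ℝ) ×ˢ Set.Ioo (-Real.pi) Real.pi), H p
      = ∫ θ in Set.Ioo (-Real.pi) Real.pi, ∫ r in Set.Ioi (0:ℝ), H (r, θ) := by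
    rw [Measure.volume_eq_prod, ← Measure.prod_restrict]
    apply integral_prod_symm
    rw [Measure.prod_restrict]
    exact hint
  -- the inner ℝ integral
  have hF : ∀ θ : ℝ, ∫ r in Set.Ioi (0:ℝ), H (r, θ) = a * φ 0 := by
    intro θ
    have hf' : ∀ r : ℝ, HasDerivAt (fun t : ℝ => φ (t • cc θ))
        ((inner ℝ (cc θ) (gradient φ (r • cc θ)) : ℝ)) r := by
      intro r
      have h1 : HasDerivAt (fun t : ℝ => t • cc θ) (cc θ) r := by
        simpa using (hasDerivAt_id r).smul_const (cc θ)
      have h2 := ((hφ.differentiable (by norm_num)) (r • cc θ)).hasFDerivAt.comp_hasDerivAt r h1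
      refine h2.congr_deriv ?_
      rw [real_inner_comm]
      exact (inner_grad φ _ _).symm
    have hf'cont : Continuous fun r : ℝ => (inner ℝ (cc θ) (gradient φ (r • cc θ)) : ℝ) :=
      Continuous.inner continuous_const (hgrad_cont.comp (continuous_id.smul continuous_const))
    have hf'supp : HasCompactSupport
        fun r : ℝ => (inner ℝ (cc θ) (gradient φ (r • cc θ)) : ℝ) := by
      apply HasCompactSupport.intro (isCompact_Icc (a := -R) (b := R))
      intro r hr
      have habs : R < |r| := by
        simp only [Set.mem_Icc, not_and_or, not_le] at hr
        rcases hr with h | h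
        · rw [abs_of_neg (by linarith)]; linarith
        · rw [abs_of_pos (by linarith)]; exact h
      rw [hgrad0 _ (by rw [norm_smul, norm_cc, mul_one, Real.norm_eq_abs]; exact habs)]
      simp
    have hint' : IntegrableOn
        (fun r : ℝ => (inner ℝ (cc θ) (gradient φ (r • cc θ)) : ℝ)) (Set.Ioi 0) :=
      (hf'cont.integrable_of_hasCompactSupport hf'supp).integrableOn
    have htend : Tendsto (fun t : ℝ => φ (t • cc θ)) atTop (𝓝 0) := by
      apply Tendsto.congr' _ tendsto_const_nhds
      filter_upwards [eventually_gt_atTop R] with t ht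
      exact (hφ0 _ (by
        rw [norm_smul, norm_cc, mul_one, Real.norm_eq_abs,
          abs_of_pos (lt_trans hRpos ht)]; exact ht)).symm
    have h5 := integral_Ioi_of_hasDerivAt_of_tendsto' (fun r _ => hf' r) hint' htend
    rw [zero_smul] at h5
    have h6 : ∫ r in Set.Ioi (0:ℝ), H (r, θ)
        = -a * ∫ r in Set.Ioi (0:ℝ), (inner ℝ (cc θ) (gradient φ (r • cc θ)) : ℝ) := by
      simp only [hHdef]
      exact integral_const_mul _ _
    rw [h6, h5]
    ring
  have hF' : ∫ θ in Set.Ioo (-Real.pi) Real.pi, ∫ r in Set.Ioi (0:ℝ), H (r, θ)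
      = ∫ θ in Set.Ioo (-Real.pi) Real.pi, (a * φ 0) :=
    setIntegral_congr_fun measurableSet_Ioo (fun θ _ => hF θ)
  have hG : ∫ θ in Set.Ioo (-Real.pi) Real.pi, (a * φ 0) = α * φ 0 := by
    rw [setIntegral_const, Real.volume_real_Ioo_of_le (by linarith), smul_eq_mul, hadef]
    field_simp
    ring
  rw [hA, hB, hC, hD', hE, hF', hG]

end Weak

/-- Proposition 2.13: the two-dimensional fundamental solution
`Φ_{2,α}`. -/
theorem statement13 (α : ℝ) (hα : 0 < α) :
    Phi2 α 0 = 0 ∧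
    ContDiffOn ℝ 2 (Phi2 α) {x : Euc 2 | x ≠ 0} ∧
    (∀ x : Euc 2, x ≠ 0 → ‖gradient (Phi2 α) x‖ < 1 ∧ MC (Phi2 α) x = 0) ∧
    (∀ φ : Euc 2 → ℝ, ContDiff ℝ 1 φ → HasCompactSupport φ →
      pairing (Phi2 α) φ = α * φ 0) ∧
    Tendsto (fun x : Euc 2 => ‖gradient (Phi2 α) x‖) (𝓝[≠] 0) (𝓝 1) ∧
    Tendsto (fun x : Euc 2 => (inner ℝ (gradient (Phi2 α) x) (‖x‖⁻¹ • x) : ℝ))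
      (𝓝[≠] 0) (𝓝 (-1)) := by
  refine ⟨Phi2_zero hα, contDiffOn_Phi2 hα, fun x hx => ⟨?_, MC_Phi2_eq_zero hα hx⟩,
    fun φ h1 h2 => pairing_Phi2 hα φ h1 h2, tendsto_norm_grad hα, tendsto_inner_grad hα⟩
  rw [norm_gradient_Phi2 hα hx]
  exact frac_lt_one hα (norm_ne_zero_iff.2 hx)
end
end

section
/- Let N ≥ 2, let P = {p_1, …, p_{m_0}} ⊂ B_{R_0/2}(0) be a finite set of distinct points with α_j > 0, let R ≥ θ_0 R_0 and let u_R be the unique weak solution of ℳ₀u = Σ_{j=1}^{m_0} α_j δ_{p_j} in B_R(0) with u = 0 on ∂B_R(0) (positive, Lipschitz, classical away from P). Then the maximum of u_R over B_R(0) is attained at one of the points p_j ∈ P, i.e. there exists j with u_R(p_j) = max_{z ∈ B_R(0)} u_R(z). -/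
open MeasureTheory Real Filter Topology Metric
open scoped NNReal

noncomputable section

set_option maxHeartbeats 1000000 in
/-- Proposition 3.5: the maximum of the solution with Dirac masses on a
ball is attained at one of the singular points. -/
theorem statement17 (N m0 : ℕ) (hN : 2 ≤ N) (R0 : ℝ) (hR0 : 1 ≤ R0)
    (p : Fin m0 → Euc N) (hp : Function.Injective p) (hpin : ∀ j, ‖p j‖ < R0 / 2)
    (α : Fin m0 → ℝ) (hα : ∀ j, 0 < α j)
    (R : ℝ) (hR : R0 < R)
    (u : Euc N → ℝ)
    (hsol : IsWeakSolBallAt u 0 R p α)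
    (hclassical : ∀ x ∈ ball (0 : Euc N) R, (∀ j, x ≠ p j) → MC u x = 0)
    (hpos : ∀ x ∈ ball (0 : Euc N) R, 0 < u x) :
    ∃ j, ∀ z ∈ ball (0 : Euc N) R, u z ≤ u (p j) := by
  by_contra hcon
  push_neg at hcon
  have hRpos : (0:ℝ) < R := by linarith
  set B : Set (Euc N) := ball (0 : Euc N) R with hBdef
  have hBopen : IsOpen B := isOpen_ball
  have hclB : closure B = closedBall (0 : Euc N) R := closure_ball _ (ne_of_gt hRpos)
  obtain ⟨hlip, hbd, hC2, hint, hweak⟩ := hsol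
  rw [← hBdef] at hlip hC2 hint hweak
  have hmB : MeasurableSet B := by rw [hBdef]; exact measurableSet_ball
  have hBsub : B ⊆ closure B := subset_closure
  have hucont : ContinuousOn u (closure B) := hlip.continuousOn
  have hucontB : ContinuousOn u B := hucont.mono hBsub
  have h0B : (0 : Euc N) ∈ B := mem_ball_self hRpos
  have hcpt : IsCompact (closure B) := by rw [hclB]; exact isCompact_closedBall _ _
  obtain ⟨q, hqcl, hqmax⟩ := hcpt.exists_isMaxOn ⟨0, hBsub h0B⟩ hucont
  set M : ℝ := u q with hMdef
  have hMpos : 0 < M := lt_of_lt_of_le (hpos 0 h0B) (hqmax (hBsub h0B))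
  have hqB : q ∈ B := by
    have h1 : ‖q‖ ≤ R := by
      rw [hclB] at hqcl; exact mem_closedBall_zero_iff.1 hqcl
    rcases lt_or_eq_of_le h1 with h2 | h2
    · exact mem_ball_zero_iff.2 h2
    · exact absurd (hbd q (mem_sphere_zero_iff_norm.2 h2)) (by rw [← hMdef]; exact ne_of_gt hMpos)
  have hpB : ∀ j, p j ∈ B := fun j => by
    rw [hBdef, mem_ball_zero_iff]
    have := hpin j; linarith
  set c' : ℝ := Finset.univ.fold max (M / 2) (fun j => u (p j)) with hc'def
  have hc'lt : c' < M := (Finset.fold_max_lt M).2 ⟨by linarith, fun j _ => by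
    obtain ⟨z, hz, hzlt⟩ := hcon j
    exact lt_of_lt_of_le hzlt (hqmax (hBsub hz))⟩
  have hc'pos : 0 < c' := by
    have : M / 2 ≤ c' := (Finset.le_fold_max (M/2)).2 (Or.inl le_rfl)
    linarith
  have hpc' : ∀ j, u (p j) ≤ c' := fun j =>
    (Finset.le_fold_max (u (p j))).2 (Or.inr ⟨j, Finset.mem_univ j, le_rfl⟩)
  -- extension and test function
  obtain ⟨ut, hutlip, hut⟩ := hlip.extend_real
  set φ : Euc N → ℝ := fun x => max (ut x - c') 0 with hφdef
  have hutlip' : LipschitzWith 1 (fun x => ut x - c') :=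
    LipschitzWith.of_dist_le_mul fun x y => by
      rw [dist_sub_right]; simpa using hutlip.dist_le_mul x y
  have hφlip : LipschitzWith 1 φ := hutlip'.max_const 0
  have hφnn : ∀ x, 0 ≤ φ x := fun x => le_max_right _ _
  have hφsphere : ∀ x ∈ sphere (0 : Euc N) R, φ x = 0 := by
    intro x hx
    have hxcl : x ∈ closure B := by rw [hclB]; exact sphere_subset_closedBall hx
    have h0 : ut x = 0 := (hut hxcl).symm.trans (hbd x hx)
    show max (ut x - c') 0 = 0
    rw [h0]; exact max_eq_right (by linarith)
  have hweakφ : pairingOn u φ B = 0 := by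
    rw [hweak φ ⟨1, hφlip⟩ hφsphere]
    refine Finset.sum_eq_zero fun j _ => ?_
    have h0 : φ (p j) = 0 := by
      show max (ut (p j) - c') 0 = 0
      rw [← hut (hBsub (hpB j))]
      exact max_eq_right (by linarith [hpc' j])
    rw [h0, mul_zero]
  -- gradient facts
  have hgradnorm : ∀ (g : Euc N → ℝ) (x : Euc N), ‖gradient g x‖ = ‖fderiv ℝ g x‖ := fun g x =>
    (InnerProductSpace.toDual ℝ (Euc N)).symm.norm_map (fderiv ℝ g x)
  have hgradzero : ∀ (g : Euc N → ℝ) (x : Euc N), fderiv ℝ g x = 0 → gradient g x = 0 :=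
    fun g x h => by
      show (InnerProductSpace.toDual ℝ (Euc N)).symm (fderiv ℝ g x) = 0
      rw [h, map_zero]
  have hfderivzero : ∀ (g : Euc N → ℝ) (x : Euc N), gradient g x = 0 → fderiv ℝ g x = 0 :=
    fun g x h => (LinearIsometryEquiv.map_eq_zero_iff _).1 h
  have huut : ∀ x ∈ B, u =ᶠ[𝓝 x] ut := fun x hx =>
    Filter.eventuallyEq_of_mem (hBopen.mem_nhds hx) (fun y hy => hut (hBsub hy))
  have hgu1 : ∀ x ∈ B, ‖gradient u x‖ ≤ 1 := by
    intro x hx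
    rw [hgradnorm u x, (huut x hx).fderiv_eq]
    simpa using norm_fderiv_le_of_lipschitz ℝ hutlip
  have hgphi1 : ∀ x ∈ B, c' < u x → gradient φ x = gradient u x := by
    intro x hx hgt
    have hcx : ContinuousAt u x := hucontB.continuousAt (hBopen.mem_nhds hx)
    have h1 : u ⁻¹' Set.Ioi c' ∈ 𝓝 x := hcx.preimage_mem_nhds (Ioi_mem_nhds hgt)
    have hev : φ =ᶠ[𝓝 x] fun y => u y - c' := by
      filter_upwards [h1, hBopen.mem_nhds hx] with y hy1 hy2
      show max (ut y - c') 0 = u y - c'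
      rw [← hut (hBsub hy2)]
      have h3 : c' < u y := hy1
      exact max_eq_left (by linarith)
    rw [hev.gradient_eq]
    show (InnerProductSpace.toDual ℝ (Euc N)).symm (fderiv ℝ (fun y => u y - c') x)
        = gradient u x
    rw [fderiv_sub_const]; rfl
  have hgphi2 : ∀ x ∈ B, u x ≤ c' → gradient φ x = 0 := by
    intro x hx hle
    rcases lt_or_eq_of_le hle with hlt | heq
    · have hcx : ContinuousAt u x := hucontB.continuousAt (hBopen.mem_nhds hx)
      have h1 : u ⁻¹' Set.Iio c' ∈ 𝓝 x := hcx.preimage_mem_nhds (Iio_mem_nhds hlt)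
      have hev : φ =ᶠ[𝓝 x] fun _ => (0:ℝ) := by
        filter_upwards [h1, hBopen.mem_nhds hx] with y hy1 hy2
        show max (ut y - c') 0 = 0
        rw [← hut (hBsub hy2)]
        have h3 : u y < c' := hy1
        exact max_eq_right (by linarith)
      rw [hev.gradient_eq, gradient_fun_const]
    · have hφx : φ x = 0 := by
        show max (ut x - c') 0 = 0
        rw [← hut (hBsub hx)]
        exact max_eq_right (by linarith)
      have hmin : IsLocalMin φ x := Filter.Eventually.of_forall fun y => by
        rw [hφx]; exact hφnn y
      exact hgradzero φ x hmin.fderiv_eq_zero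
  -- the integrand
  set f : Euc N → ℝ := fun x =>
    (inner ℝ (gradient u x) (gradient φ x) : ℝ) / Real.sqrt (1 - ‖gradient u x‖ ^ 2) with hfdef
  have hfcases : ∀ x ∈ B, f x = ‖gradient φ x‖ ^ 2 / Real.sqrt (1 - ‖gradient u x‖ ^ 2) := by
    intro x hx
    rcases le_or_gt (u x) c' with h | h
    · rw [hfdef]
      simp only [hgphi2 x hx h, inner_zero_right, norm_zero]
      norm_num
    · simp only [hfdef, hgphi1 x hx h, real_inner_self_eq_norm_sq]
  have hfnn : ∀ x ∈ B, 0 ≤ f x := fun x hx => by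
    rw [hfcases x hx]; positivity
  have hfbound : ∀ x ∈ B,
      f x ≤ ‖gradient u x‖ / Real.sqrt (1 - ‖gradient u x‖ ^ 2) := by
    intro x hx
    rw [hfcases x hx]
    rcases le_or_gt (u x) c' with h | h
    · rw [hgphi2 x hx h]
      simp only [norm_zero, ne_eq, OfNat.ofNat_ne_zero, not_false_eq_true, zero_pow, zero_div]
      positivity
    · rw [hgphi1 x hx h]
      rcases eq_or_lt_of_le (Real.sqrt_nonneg (1 - ‖gradient u x‖ ^ 2)) with hs | hs
      · rw [← hs, div_zero, div_zero]
      · have h1 : ‖gradient u x‖ ^ 2 ≤ ‖gradient u x‖ := by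
          nlinarith [hgu1 x hx, norm_nonneg (gradient u x)]
        exact div_le_div_of_nonneg_right h1 hs.le
  -- measurability and integrability
  have hmg : ∀ g : Euc N → ℝ, Measurable (gradient g) := fun g => by
    have h1 : gradient g = fun x => (InnerProductSpace.toDual ℝ (Euc N)).symm (fderiv ℝ g x) := rfl
    rw [h1]
    exact (LinearIsometryEquiv.continuous _).measurable.comp (measurable_fderiv ℝ g)
  have hmf : Measurable f := by
    apply Measurable.div
    · exact (hmg u).inner (hmg φ)
    · exact (measurable_const.sub (((hmg u).norm).pow measurable_const)).sqrt
  have hfint : IntegrableOn f B volume := by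
    refine Integrable.mono' hint hmf.aestronglyMeasurable ?_
    rw [ae_restrict_iff' hmB]
    exact Filter.Eventually.of_forall fun x hx => by
      rw [Real.norm_of_nonneg (hfnn x hx)]
      exact hfbound x hx
  have hfzero : ∀ᵐ x ∂(volume : Measure (Euc N)), x ∈ B → f x = 0 := by
    have h0 : ∫ x in B, f x = 0 := by
      have h1 : pairingOn u φ B = ∫ x in B, f x := rfl
      rw [← h1, hweakφ]
    have hnn : 0 ≤ᵐ[volume.restrict B] f :=
      (ae_restrict_iff' hmB).mpr (Filter.Eventually.of_forall fun x hx => hfnn x hx)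
    have h2 := (integral_eq_zero_iff_of_nonneg_ae hnn hfint).1 h0
    exact (ae_restrict_iff' hmB).1 h2
  have hZ : volume {x : Euc N | x ∈ B ∧ c' < u x ∧ ‖gradient u x‖ < 1 ∧ gradient u x ≠ 0} = 0 := by
    rw [Filter.Eventually, mem_ae_iff] at hfzero
    refine measure_mono_null ?_ hfzero
    rintro x ⟨hxB, hgt, hlt1, hne⟩
    simp only [Set.mem_compl_iff, Set.mem_setOf_eq, Classical.not_imp, not_forall]
    refine ⟨hxB, ?_⟩
    have h1 : f x = ‖gradient u x‖ ^ 2 / Real.sqrt (1 - ‖gradient u x‖ ^ 2) := by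
      rw [hfcases x hxB, hgphi1 x hxB hgt]
    have h2 : 0 < Real.sqrt (1 - ‖gradient u x‖ ^ 2) := by
      apply Real.sqrt_pos.2
      nlinarith [norm_nonneg (gradient u x)]
    have h3 : 0 < ‖gradient u x‖ ^ 2 := pow_pos (norm_pos_iff.2 hne) 2
    rw [h1]
    exact ne_of_gt (div_pos h3 h2)
  -- topology
  set S : Set (Euc N) := {x | x ∈ B ∧ ∀ j, x ≠ p j} with hSdef
  have hSopen : IsOpen S := by
    have h1 : S = B ∩ ⋂ j, {p j}ᶜ := by
      ext x; simp [hSdef, Set.mem_iInter]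
    rw [h1]
    exact hBopen.inter (isOpen_iInter_of_finite fun j => isOpen_compl_singleton)
  have hgradcont : ContinuousOn (gradient u) S := by
    have h1 : ContinuousOn (fderiv ℝ u) S :=
      hC2.continuousOn_fderiv_of_isOpen hSopen (by norm_num)
    have h2 : gradient u = fun x => (InnerProductSpace.toDual ℝ (Euc N)).symm (fderiv ℝ u x) := rfl
    rw [h2]
    exact (LinearIsometryEquiv.continuous _).comp_continuousOn h1
  set U : Set (Euc N) := B ∩ u ⁻¹' Set.Ioi c' with hUdef
  have hUopen : IsOpen U := hucontB.isOpen_inter_preimage hBopen isOpen_Ioi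
  have hUS : U ⊆ S := fun x hx => ⟨hx.1, fun j hj => by
    have h1 : c' < u x := hx.2
    rw [hj] at h1
    exact absurd h1 (not_lt.2 (hpc' j))⟩
  set V : Set (Euc N) := U ∩ {x | ‖gradient u x‖ < 1} with hVdef
  have hVopen : IsOpen V := by
    have h1 : V = U ∩ (fun x => ‖gradient u x‖) ⁻¹' Set.Iio 1 := rfl
    rw [h1]
    exact ContinuousOn.isOpen_inter_preimage ((hgradcont.mono hUS).norm) hUopen isOpen_Iio
  have hV0 : ∀ x ∈ V, gradient u x = 0 := by
    intro x hx
    by_contra hne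
    set T : Set (Euc N) := V ∩ (gradient u) ⁻¹' ({0}ᶜ) with hTdef
    have hTopen : IsOpen T :=
      ContinuousOn.isOpen_inter_preimage (hgradcont.mono fun y hy => hUS hy.1)
        hVopen isOpen_compl_singleton
    have hxT : x ∈ T := ⟨hx, hne⟩
    have hTZ : T ⊆ {x : Euc N | x ∈ B ∧ c' < u x ∧ ‖gradient u x‖ < 1 ∧ gradient u x ≠ 0} :=
      fun y hy => ⟨hy.1.1.1, hy.1.1.2, hy.1.2, hy.2⟩
    have hposT := hTopen.measure_pos volume ⟨x, hxT⟩
    exact hposT.ne' (measure_mono_null hTZ hZ)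
  have hqU : q ∈ U := ⟨hqB, show c' < u q from hc'lt⟩
  have hgradq : gradient u q = 0 := by
    have hloc : IsLocalMax u q :=
      hqmax.isLocalMax (mem_of_superset (hBopen.mem_nhds hqB) hBsub)
    exact hgradzero u q hloc.fderiv_eq_zero
  have hqV : q ∈ V := ⟨hqU, by show ‖gradient u q‖ < 1; rw [hgradq]; simp⟩
  have hcover : U ⊆ V ∪ (U \ closure V) := by
    intro x hx
    by_cases hxcl : x ∈ closure V
    · left
      have hcx : ContinuousAt (gradient u) x := hgradcont.continuousAt (hSopen.mem_nhds (hUS hx))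
      have hne : (𝓝[V] x).NeBot := mem_closure_iff_nhdsWithin_neBot.1 hxcl
      have h1 : Tendsto (gradient u) (𝓝[V] x) (𝓝 (gradient u x)) := hcx.continuousWithinAt
      have h2 : Tendsto (gradient u) (𝓝[V] x) (𝓝 0) := by
        refine Tendsto.congr' ?_ tendsto_const_nhds
        filter_upwards [self_mem_nhdsWithin] with y hy
        exact (hV0 y hy).symm
      have h3 : gradient u x = 0 := tendsto_nhds_unique h1 h2
      exact ⟨hx, by show ‖gradient u x‖ < 1; rw [h3]; simp⟩
    · right; exact ⟨hx, hxcl⟩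
  have hdisj : Disjoint V (U \ closure V) :=
    Set.disjoint_left.2 fun x hxV hxD => hxD.2 (subset_closure hxV)
  set W : Set (Euc N) := connectedComponentIn U q with hWdef
  have hWopen : IsOpen W := hUopen.connectedComponentIn
  have hWU : W ⊆ U := connectedComponentIn_subset _ _
  have hqW : q ∈ W := mem_connectedComponentIn hqU
  have hWV : W ⊆ V :=
    isPreconnected_connectedComponentIn.subset_left_of_subset_union hVopen
      (hUopen.sdiff isClosed_closure) hdisj (fun x hx => hcover (hWU hx)) ⟨q, hqW, hqV⟩
  -- u is locally constant on W
  have hball : ∀ x ∈ W, ∃ ε > 0, Metric.ball x ε ⊆ W ∧ ∀ y ∈ Metric.ball x ε, u y = u x := by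
    intro x hx
    obtain ⟨ε, hε, hsub⟩ := Metric.isOpen_iff.1 hWopen x hx
    refine ⟨ε, hε, hsub, fun y hy => ?_⟩
    have hdiff : ∀ z ∈ Metric.ball x ε, DifferentiableAt ℝ u z := fun z hz =>
      (hC2.differentiableOn (by norm_num)).differentiableAt
        (hSopen.mem_nhds (hUS (hWU (hsub hz))))
    have hbd0 : ∀ z ∈ Metric.ball x ε, ‖fderiv ℝ u z‖ ≤ 0 := fun z hz => by
      rw [hfderivzero u z (hV0 z (hWV (hsub hz)))]; simp
    have h1 := Convex.norm_image_sub_le_of_norm_fderiv_le hdiff hbd0 (convex_ball x ε)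
      (mem_ball_self hε) hy
    have h2 : ‖u y - u x‖ ≤ 0 := by simpa using h1
    have h3 : u y - u x = 0 := by
      have := norm_nonneg (u y - u x)
      have h4 : ‖u y - u x‖ = 0 := le_antisymm h2 this
      exact norm_eq_zero.1 h4
    linarith [h3]
  have hWconst : ∀ x ∈ W, u x = M := by
    set A : Set (Euc N) := {x | x ∈ W ∧ u x = M} with hAdef
    set A' : Set (Euc N) := {x | x ∈ W ∧ u x ≠ M} with hA'def
    have hAopen : IsOpen A := by
      rw [Metric.isOpen_iff]
      rintro x ⟨hxW, hxM⟩
      obtain ⟨ε, hε, hsub, hconst⟩ := hball x hxW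
      exact ⟨ε, hε, fun y hy => ⟨hsub hy, (hconst y hy).trans hxM⟩⟩
    have hA'open : IsOpen A' := by
      rw [Metric.isOpen_iff]
      rintro x ⟨hxW, hxM⟩
      obtain ⟨ε, hε, hsub, hconst⟩ := hball x hxW
      exact ⟨ε, hε, fun y hy => ⟨hsub hy, by rw [hconst y hy]; exact hxM⟩⟩
    have hdisjA : Disjoint A A' := Set.disjoint_left.2 fun x hxA hxA' => hxA'.2 hxA.2
    have hWA : W ⊆ A :=
      isPreconnected_connectedComponentIn.subset_left_of_subset_union hAopen hA'open hdisjA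
        (fun x hx => by
          by_cases h : u x = M
          · exact Or.inl ⟨hx, h⟩
          · exact Or.inr ⟨hx, h⟩)
        ⟨q, hqW, hqW, rfl⟩
    exact fun x hx => (hWA hx).2
  have hclW : ∀ y, y ∈ closure W → y ∈ B → y ∈ W := by
    intro y hycl hyB
    have huy : u y = M := by
      have hne : (𝓝[W] y).NeBot := mem_closure_iff_nhdsWithin_neBot.1 hycl
      have h1 : Tendsto u (𝓝[W] y) (𝓝 (u y)) :=
        (hucontB.continuousAt (hBopen.mem_nhds hyB)).continuousWithinAt
      have h2 : Tendsto u (𝓝[W] y) (𝓝 M) := by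
        refine Tendsto.congr' ?_ tendsto_const_nhds
        filter_upwards [self_mem_nhdsWithin] with z hz
        exact (hWconst z hz).symm
      exact tendsto_nhds_unique h1 h2
    have hyU : y ∈ U := ⟨hyB, show c' < u y by rw [huy]; exact hc'lt⟩
    have hyW2 : y ∈ connectedComponentIn U y := mem_connectedComponentIn hyU
    obtain ⟨z, hzW2, hzW⟩ : (connectedComponentIn U y ∩ W).Nonempty :=
      mem_closure_iff.1 hycl _ hUopen.connectedComponentIn hyW2
    have e1 : connectedComponentIn U y = connectedComponentIn U z := connectedComponentIn_eq hzW2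
    have e2 : connectedComponentIn U q = connectedComponentIn U z := connectedComponentIn_eq hzW
    show y ∈ connectedComponentIn U q
    rw [e2, ← e1]
    exact hyW2
  have hBW : B ⊆ W := by
    have hpre : IsPreconnected B := (convex_ball (0:Euc N) R).isPreconnected
    refine hpre.subset_left_of_subset_union hWopen (hBopen.sdiff isClosed_closure)
      (Set.disjoint_left.2 fun x hxW hxD => hxD.2 (subset_closure hxW)) ?_ ⟨q, hqB, hqW⟩
    intro x hx
    by_cases hxcl : x ∈ closure W
    · exact Or.inl (hclW x hxcl hx)
    · exact Or.inr ⟨hx, hxcl⟩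
  have hkey : ∀ x ∈ B, u x = M := fun x hx => hWconst x (hBW hx)
  -- contradiction at the boundary
  have hNpos : 0 < N := by omega
  set w : Euc N := EuclideanSpace.single (⟨0, hNpos⟩ : Fin N) R with hwdef
  have hwnorm : ‖w‖ = R := by
    rw [hwdef, EuclideanSpace.norm_single]
    exact abs_of_pos hRpos
  have hwsph : w ∈ sphere (0 : Euc N) R := mem_sphere_zero_iff_norm.2 hwnorm
  have hw0 : u w = 0 := hbd w hwsph
  have hwcl : w ∈ closure B := by
    rw [hclB, mem_closedBall_zero_iff, hwnorm]
  have huwM : u w = M := by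
    have hne : (𝓝[B] w).NeBot := mem_closure_iff_nhdsWithin_neBot.1 hwcl
    have h1 : Tendsto u (𝓝[B] w) (𝓝 (u w)) := (hucont w hwcl).mono hBsub
    have h2 : Tendsto u (𝓝[B] w) (𝓝 M) := by
      refine Tendsto.congr' ?_ tendsto_const_nhds
      filter_upwards [self_mem_nhdsWithin] with z hz
      exact (hkey z hz).symm
    exact tendsto_nhds_unique h1 h2
  rw [hw0] at huwM
  exact absurd huwM.symm (ne_of_gt hMpos)
end
end
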